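/- arXiv:2506.22361 — 2 statements merged into one kernel-verified Lean document; each statement's English description precedes it below -/
import Mathlib

section
/- For 0 ≤ s ≤ t ≤ 1, define Γ(s,t) = 4s(4t − 2t² − st − s²/3) if s+t ≤ 1 and Γ(s,t) = 4{s(1−s+2t−t²) − (1−t)³/3} if s+t > 1, extended symmetrically. Then for all s,t ∈ [0,1], |n Σ_{i=1}^n ν_{ni}(s)ν_{ni}(t) − Γ(s,t)| ≤ C n⁻¹ for an absolute constant C. -/
open Finset

noncomputable def u (n : ℕ) (t : ℝ) : ℝ :=
  ((⌊(n : ℝ) * t⌋ * (2 * (n : ℤ) - ⌊(n : ℝ) * t⌋ - 1) : ℤ) : ℝ) / ((n : ℝ) ^ 2 - n)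

noncomputable def nu (n i : ℕ) (t : ℝ) : ℝ :=
  2 * ((min ⌊(n : ℝ) * t⌋ ((i : ℤ) - 1) + min ⌊(n : ℝ) * t⌋ ((n : ℤ) - i) : ℤ) : ℝ) /
    ((n : ℝ) ^ 2 - n)

/-- The limiting covariance function `Γ` of Lemma 1, extended symmetrically. -/
noncomputable def Gam (s t : ℝ) : ℝ :=
  if s ≤ t then
    (if s + t ≤ 1 then 4 * s * (4 * t - 2 * t ^ 2 - s * t - s ^ 2 / 3)
     else 4 * (s * (1 - s + 2 * t - t ^ 2) - (1 - t) ^ 3 / 3))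
  else
    (if t + s ≤ 1 then 4 * t * (4 * s - 2 * s ^ 2 - t * s - t ^ 2 / 3)
     else 4 * (t * (1 - t + 2 * s - s ^ 2) - (1 - s) ^ 3 / 3))


/-- step identity for the linear sums -/
lemma T2step (m : ℤ) :
    max m 0 * (max m 0 + 1) - max (m - 1) 0 * (max (m - 1) 0 + 1) = 2 * max m 0 := by
  rcases le_or_gt m 0 with h | h
  · rw [max_eq_right h, max_eq_right (by omega : m - 1 ≤ 0)]; ring
  · rw [max_eq_left h.le, max_eq_left (by omega : (0:ℤ) ≤ m - 1)]; ring

/-- step identity for the quadratic sums -/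
lemma Phistep (d m : ℤ) (hd : 0 ≤ d) :
    (max m 0 * (max m 0 + 1) * (2 * max m 0 + 1) + 3 * d * (max m 0 * (max m 0 + 1)))
      - (max (m-1) 0 * (max (m-1) 0 + 1) * (2 * max (m-1) 0 + 1)
          + 3 * d * (max (m-1) 0 * (max (m-1) 0 + 1)))
      = 6 * (max m 0 * max (m + d) 0) := by
  rcases le_or_gt m 0 with h | h
  · rw [max_eq_right h, max_eq_right (by omega : m - 1 ≤ 0)]; ring
  · rw [max_eq_left h.le, max_eq_left (by omega : (0:ℤ) ≤ m - 1),
      max_eq_left (by omega : (0:ℤ) ≤ m + d)]; ring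

lemma sumP (A : ℤ) (n : ℕ) :
    2 * ∑ i ∈ Finset.Icc 1 n, max (A + 1 - (i:ℤ)) 0
      = max A 0 * (max A 0 + 1) - max (A - n) 0 * (max (A - n) 0 + 1) := by
  induction n with
  | zero => simp
  | succ n ih =>
      rw [Finset.sum_Icc_succ_top (by omega : 1 ≤ n + 1), mul_add, ih]
      have := T2step (A - n)
      push_cast
      have h1 : A + 1 - ((n:ℤ) + 1) = A - n - 1 + 1 := by ring
      have h2 : A - ((n:ℤ) + 1) = A - n - 1 := by ring
      rw [h2]
      have h3 : max (A + 1 - ((n:ℤ)+1)) 0 = max (A - n) 0 := by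
        congr 1; ring
      rw [h3]
      linarith [T2step (A - n)]

lemma sumQ (c : ℤ) (n : ℕ) :
    2 * ∑ i ∈ Finset.Icc 1 n, max ((i:ℤ) - c) 0
      = max ((n:ℤ) - c) 0 * (max ((n:ℤ) - c) 0 + 1) - max (-c) 0 * (max (-c) 0 + 1) := by
  induction n with
  | zero => simp
  | succ n ih =>
      rw [Finset.sum_Icc_succ_top (by omega : 1 ≤ n + 1), mul_add, ih]
      push_cast
      have h3 : (n:ℤ) + 1 - c - 1 = (n:ℤ) - c := by ring
      linarith [T2step ((n:ℤ) + 1 - c), h3 ▸ T2step ((n:ℤ) + 1 - c)]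

lemma sumPP (A B : ℤ) (hAB : A ≤ B) (n : ℕ) :
    6 * ∑ i ∈ Finset.Icc 1 n, max (A + 1 - (i:ℤ)) 0 * max (B + 1 - (i:ℤ)) 0
      = (max A 0 * (max A 0 + 1) * (2 * max A 0 + 1) + 3 * (B - A) * (max A 0 * (max A 0 + 1)))
        - (max (A - n) 0 * (max (A - n) 0 + 1) * (2 * max (A - n) 0 + 1)
            + 3 * (B - A) * (max (A - n) 0 * (max (A - n) 0 + 1))) := by
  induction n with
  | zero => simp
  | succ n ih =>
      rw [Finset.sum_Icc_succ_top (by omega : 1 ≤ n + 1), mul_add, ih]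
      push_cast
      have h1 : max (A + 1 - ((n:ℤ)+1)) 0 = max (A - n) 0 := by congr 1; ring
      have h2 : max (B + 1 - ((n:ℤ)+1)) 0 = max ((A - n) + (B - A)) 0 := by congr 1; ring
      have h3 : A - ((n:ℤ)+1) = (A - n) - 1 := by ring
      rw [h1, h2, h3]
      linarith [Phistep (B - A) (A - n) (by omega)]

lemma sumQQ (c1 c2 : ℤ) (hc : c2 ≤ c1) (n : ℕ) :
    6 * ∑ i ∈ Finset.Icc 1 n, max ((i:ℤ) - c1) 0 * max ((i:ℤ) - c2) 0
      = (max ((n:ℤ) - c1) 0 * (max ((n:ℤ) - c1) 0 + 1) * (2 * max ((n:ℤ) - c1) 0 + 1)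
          + 3 * (c1 - c2) * (max ((n:ℤ) - c1) 0 * (max ((n:ℤ) - c1) 0 + 1)))
        - (max (-c1) 0 * (max (-c1) 0 + 1) * (2 * max (-c1) 0 + 1)
            + 3 * (c1 - c2) * (max (-c1) 0 * (max (-c1) 0 + 1))) := by
  induction n with
  | zero => simp
  | succ n ih =>
      rw [Finset.sum_Icc_succ_top (by omega : 1 ≤ n + 1), mul_add, ih]
      push_cast
      have h1 : max ((n:ℤ) + 1 - c2) 0 = max (((n:ℤ) + 1 - c1) + (c1 - c2)) 0 := by
        congr 1; ring
      have h3 : (n:ℤ) + 1 - c1 - 1 = (n:ℤ) - c1 := by ring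
      rw [h1]
      linarith [h3 ▸ Phistep (c1 - c2) ((n:ℤ) + 1 - c1) (by omega)]

lemma sumPQ (A c : ℤ) (hc : 0 ≤ c) (n : ℕ) :
    6 * ∑ i ∈ Finset.Icc 1 n, max (A + 1 - (i:ℤ)) 0 * max ((i:ℤ) - c) 0
      = 3 * (A + 1 - c) * (max (min (n:ℤ) A - c) 0 * (max (min (n:ℤ) A - c) 0 + 1))
        - max (min (n:ℤ) A - c) 0 * (max (min (n:ℤ) A - c) 0 + 1)
            * (2 * max (min (n:ℤ) A - c) 0 + 1) := by
  induction n with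
  | zero =>
      simp only [Finset.Icc_self, Nat.cast_zero]
      rw [show Finset.Icc 1 0 = (∅ : Finset ℕ) by decide]
      have : max (min (0:ℤ) A - c) 0 = 0 := by omega
      rw [this]; simp
  | succ n ih =>
      rw [Finset.sum_Icc_succ_top (by omega : 1 ≤ n + 1), mul_add, ih]
      push_cast
      rcases le_or_gt A (n:ℤ) with h | h
      · have h1 : min ((n:ℤ)+1) A = A := min_eq_right (by omega)
        have h2 : min (n:ℤ) A = A := min_eq_right h
        have h3 : max (A + 1 - ((n:ℤ)+1)) 0 = 0 := by omega
        rw [h1, h2, h3]; ring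
      · have h1 : min ((n:ℤ)+1) A = (n:ℤ)+1 := min_eq_left (by omega)
        have h2 : min (n:ℤ) A = (n:ℤ) := min_eq_left (by omega)
        have h4 : max (A + 1 - ((n:ℤ)+1)) 0 = A - n := by omega
        rw [h1, h2, h4]
        rcases le_or_gt ((n:ℤ) + 1 - c) 0 with hk | hk
        · have e1 : max ((n:ℤ) + 1 - c) 0 = 0 := by omega
          have e2 : max ((n:ℤ) - c) 0 = 0 := by omega
          have e3 : max ((n:ℤ) + 1 - c) 0 = 0 := e1
          rw [e1, e2]; ring
        · have e1 : max ((n:ℤ) + 1 - c) 0 = (n:ℤ) + 1 - c := by omega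
          have e2 : max ((n:ℤ) - c) 0 = (n:ℤ) - c := by omega
          rw [e1, e2]; ring

lemma master (n : ℕ) (a b : ℤ) (h0 : 0 ≤ a) (hab : a ≤ b) (hbn : b ≤ (n:ℤ)) :
    6 * ∑ i ∈ Finset.Icc 1 n,
        (min a ((i:ℤ) - 1) + min a ((n:ℤ) - i)) * (min b ((i:ℤ) - 1) + min b ((n:ℤ) - i))
      = 24*a*b*n - 12*a*b*(b+1) - 12*b*a*(a+1)
        + 2*(a*(a+1)*(2*a+1) + 3*(b-a)*a*(a+1))
        + 2 * max (a+b-(n:ℤ)) 0 * (max (a+b-(n:ℤ)) 0 + 1) * (max (a+b-(n:ℤ)) 0 + 2) := by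
  have key : ∀ i ∈ Finset.Icc 1 n,
      (min a ((i:ℤ) - 1) + min a ((n:ℤ) - i)) * (min b ((i:ℤ) - 1) + min b ((n:ℤ) - i))
      = 4*a*b - 2*a*max (b + 1 - (i:ℤ)) 0 - 2*a*max ((i:ℤ) - ((n:ℤ) - b)) 0
        - 2*b*max (a + 1 - (i:ℤ)) 0 - 2*b*max ((i:ℤ) - ((n:ℤ) - a)) 0
        + max (a + 1 - (i:ℤ)) 0 * max (b + 1 - (i:ℤ)) 0
        + max ((i:ℤ) - ((n:ℤ) - a)) 0 * max ((i:ℤ) - ((n:ℤ) - b)) 0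
        + max (a + 1 - (i:ℤ)) 0 * max ((i:ℤ) - ((n:ℤ) - b)) 0
        + max (b + 1 - (i:ℤ)) 0 * max ((i:ℤ) - ((n:ℤ) - a)) 0 := by
    intro i hi
    have e1 : min a ((i:ℤ) - 1) = a - max (a + 1 - (i:ℤ)) 0 := by omega
    have e2 : min a ((n:ℤ) - i) = a - max ((i:ℤ) - ((n:ℤ) - a)) 0 := by omega
    have e3 : min b ((i:ℤ) - 1) = b - max (b + 1 - (i:ℤ)) 0 := by omega
    have e4 : min b ((n:ℤ) - i) = b - max ((i:ℤ) - ((n:ℤ) - b)) 0 := by omega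
    rw [e1, e2, e3, e4]; ring
  rw [Finset.sum_congr rfl key]
  simp only [Finset.sum_add_distrib, Finset.sum_sub_distrib, ← Finset.mul_sum,
    Finset.sum_const, Nat.card_Icc, Nat.add_sub_cancel, nsmul_eq_mul]
  have hPa := sumP a n
  have hPb := sumP b n
  have hQa := sumQ ((n:ℤ) - a) n
  have hQb := sumQ ((n:ℤ) - b) n
  have hPP := sumPP a b hab n
  have hQQ := sumQQ ((n:ℤ) - a) ((n:ℤ) - b) (by omega) n
  have hPQ := sumPQ a ((n:ℤ) - b) (by omega) n
  have hQP := sumPQ b ((n:ℤ) - a) (by omega) n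
  rw [max_eq_left h0, max_eq_right (by omega : a - (n:ℤ) ≤ 0)] at hPa hPP
  rw [max_eq_left (by omega : (0:ℤ) ≤ b), max_eq_right (by omega : b - (n:ℤ) ≤ 0)] at hPb
  rw [show (n:ℤ) - ((n:ℤ) - a) = a by ring, max_eq_left h0,
    max_eq_right (by omega : -((n:ℤ) - a) ≤ 0)] at hQa hQQ
  rw [show (n:ℤ) - ((n:ℤ) - b) = b by ring, max_eq_left (by omega : (0:ℤ) ≤ b),
    max_eq_right (by omega : -((n:ℤ) - b) ≤ 0)] at hQb
  rw [min_eq_right (by omega : a ≤ (n:ℤ)),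
    show a - ((n:ℤ) - b) = a + b - (n:ℤ) by ring] at hPQ
  rw [min_eq_right hbn, show b - ((n:ℤ) - a) = a + b - (n:ℤ) by ring] at hQP
  rcases le_or_gt (a + b - (n:ℤ)) 0 with hM | hM
  · rw [max_eq_right hM] at hPQ hQP ⊢
    linear_combination (-6*a)*hPb + (-6*a)*hQb + (-6*b)*hPa + (-6*b)*hQa
      + hPP + hQQ + hPQ + hQP
  · rw [max_eq_left hM.le] at hPQ hQP ⊢
    linear_combination (-6*a)*hPb + (-6*a)*hQb + (-6*b)*hPa + (-6*b)*hQa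
      + hPP + hQQ + hPQ + hQP

noncomputable def f1 (s t : ℝ) : ℝ := 4 * s * (4 * t - 2 * t ^ 2 - s * t - s ^ 2 / 3)
noncomputable def f2 (s t : ℝ) : ℝ := 4 * (s * (1 - s + 2 * t - t ^ 2) - (1 - t) ^ 3 / 3)

lemma lip1 (s t σ τ h : ℝ) (hh : 0 ≤ h)
    (hσ0 : 0 ≤ σ) (hσs : σ ≤ s) (hs1 : s ≤ 1) (hsh : s ≤ σ + h)
    (hτ0 : 0 ≤ τ) (hτt : τ ≤ t) (ht1 : t ≤ 1) (hth : t ≤ τ + h) :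
    |f1 s t - f1 σ τ| ≤ 72 * h := by
  have key : f1 s t - f1 σ τ
      = (s - σ) * (16*t - 8*t^2 - 4*t*(s+σ) - (4/3)*(s^2+s*σ+σ^2))
        + (t - τ) * (16*σ - 8*σ*(t+τ) - 4*σ^2) := by
    unfold f1; ring
  have hQ1 : |16*t - 8*t^2 - 4*t*(s+σ) - (4/3)*(s^2+s*σ+σ^2)| ≤ 36 := by
    rw [abs_le]; constructor <;> nlinarith [sq_nonneg t, sq_nonneg s, sq_nonneg σ]
  have hQ2 : |16*σ - 8*σ*(t+τ) - 4*σ^2| ≤ 36 := by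
    rw [abs_le]; constructor <;> nlinarith [sq_nonneg σ]
  have h1 : |s - σ| ≤ h := by rw [abs_of_nonneg (by linarith)]; linarith
  have h2 : |t - τ| ≤ h := by rw [abs_of_nonneg (by linarith)]; linarith
  calc |f1 s t - f1 σ τ| ≤ |(s - σ) * (16*t - 8*t^2 - 4*t*(s+σ) - (4/3)*(s^2+s*σ+σ^2))|
        + |(t - τ) * (16*σ - 8*σ*(t+τ) - 4*σ^2)| := by rw [key]; exact abs_add_le _ _
    _ = |s - σ| * |16*t - 8*t^2 - 4*t*(s+σ) - (4/3)*(s^2+s*σ+σ^2)|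
        + |t - τ| * |16*σ - 8*σ*(t+τ) - 4*σ^2| := by rw [abs_mul, abs_mul]
    _ ≤ h * 36 + h * 36 :=
        add_le_add (mul_le_mul h1 hQ1 (abs_nonneg _) hh) (mul_le_mul h2 hQ2 (abs_nonneg _) hh)
    _ = 72 * h := by ring

lemma lip2 (s t σ τ h : ℝ) (hh : 0 ≤ h)
    (hσ0 : 0 ≤ σ) (hσs : σ ≤ s) (hs1 : s ≤ 1) (hsh : s ≤ σ + h)
    (hτ0 : 0 ≤ τ) (hτt : τ ≤ t) (ht1 : t ≤ 1) (hth : t ≤ τ + h) :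
    |f2 s t - f2 σ τ| ≤ 72 * h := by
  have key : f2 s t - f2 σ τ
      = (s - σ) * (4 - 4*(s+σ) + 8*t - 4*t^2)
        + (t - τ) * (8*σ - 4*σ*(t+τ) + (4/3)*((1-t)^2+(1-t)*(1-τ)+(1-τ)^2)) := by
    unfold f2; ring
  have hQ1 : |4 - 4*(s+σ) + 8*t - 4*t^2| ≤ 36 := by
    rw [abs_le]; constructor <;> nlinarith [sq_nonneg t]
  have hQ2 : |8*σ - 4*σ*(t+τ) + (4/3)*((1-t)^2+(1-t)*(1-τ)+(1-τ)^2)| ≤ 36 := by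
    rw [abs_le]; constructor <;>
      nlinarith [sq_nonneg (1-t), sq_nonneg (1-τ), mul_nonneg (by linarith : (0:ℝ) ≤ 1 - t) (by linarith : (0:ℝ) ≤ 1 - τ)]
  have h1 : |s - σ| ≤ h := by rw [abs_of_nonneg (by linarith)]; linarith
  have h2 : |t - τ| ≤ h := by rw [abs_of_nonneg (by linarith)]; linarith
  calc |f2 s t - f2 σ τ| ≤ |(s - σ) * (4 - 4*(s+σ) + 8*t - 4*t^2)|
        + |(t - τ) * (8*σ - 4*σ*(t+τ) + (4/3)*((1-t)^2+(1-t)*(1-τ)+(1-τ)^2))| := by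
          rw [key]; exact abs_add_le _ _
    _ = |s - σ| * |4 - 4*(s+σ) + 8*t - 4*t^2|
        + |t - τ| * |8*σ - 4*σ*(t+τ) + (4/3)*((1-t)^2+(1-t)*(1-τ)+(1-τ)^2)| := by
          rw [abs_mul, abs_mul]
    _ ≤ h * 36 + h * 36 :=
        add_le_add (mul_le_mul h1 hQ1 (abs_nonneg _) hh) (mul_le_mul h2 hQ2 (abs_nonneg _) hh)
    _ = 72 * h := by ring

lemma branchdiff (s t h : ℝ) (hs1 : s ≤ 1) (ht1 : t ≤ 1) (hgt : 1 < s + t)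
    (hle : s + t ≤ 1 + 2 * h) (hh : 0 < h) :
    |f1 s t - f2 s t| ≤ 3 * h := by
  obtain ⟨w, hw⟩ : ∃ w : ℝ, w = s + t - 1 := ⟨_, rfl⟩
  have key : f1 s t - f2 s t = -(4/3) * w^3 := by rw [hw]; unfold f1 f2; ring
  have hw0 : 0 < w := by rw [hw]; linarith
  have hw1 : w ≤ 1 := by rw [hw]; linarith
  have hw2 : w ≤ 2 * h := by rw [hw]; linarith
  have hw3 : w^3 ≤ w := by nlinarith [mul_nonneg (mul_nonneg hw0.le (by linarith : (0:ℝ) ≤ 1 - w)) (by linarith : (0:ℝ) ≤ 1 + w)]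
  rw [key, abs_of_nonpos (by nlinarith [pow_pos hw0 3])]
  nlinarith [pow_pos hw0 3]

lemma mono4 {nn x y z w : ℝ} (hx0 : 0 ≤ x) (hx : x ≤ nn) (hy0 : 0 ≤ y) (hy : y ≤ nn)
    (hz0 : 0 ≤ z) (hz : z ≤ nn) (hw0 : 0 ≤ w) (hw : w ≤ nn) : x*y*z*w ≤ nn^4 := by
  have hn0 : 0 ≤ nn := hx0.trans hx
  have h1 : x*y ≤ nn*nn := mul_le_mul hx hy hy0 hn0
  have h2 : z*w ≤ nn*nn := mul_le_mul hz hw hw0 hn0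
  calc x*y*z*w = (x*y)*(z*w) := by ring
    _ ≤ (nn*nn)*(nn*nn) := mul_le_mul h1 h2 (mul_nonneg hz0 hw0) (mul_nonneg hn0 hn0)
    _ = nn^4 := by ring

lemma N1bound (x y nn : ℝ) (hx0 : 0 ≤ x) (hxn : x ≤ nn) (hy0 : 0 ≤ y) (hyn : y ≤ nn)
    (h1n : 1 ≤ nn) :
    |4*x*nn^2 - 48*x*y*nn + 60*x*y*nn^2 + 24*x*y^2 - 48*x*y^2*nn + 12*x^2*y
      - 24*x^2*y*nn + 4*x^3 - 8*x^3*nn| ≤ 232 * nn^4 := by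
  have hn0 : (0:ℝ) ≤ nn := by linarith
  have h01 : (0:ℝ) ≤ 1 := by norm_num
  have m1 : x*nn*nn*1 ≤ nn^4 := mono4 hx0 hxn hn0 le_rfl hn0 le_rfl h01 h1n
  have m2 : x*y*nn*1 ≤ nn^4 := mono4 hx0 hxn hy0 hyn hn0 le_rfl h01 h1n
  have m3 : x*y*nn*nn ≤ nn^4 := mono4 hx0 hxn hy0 hyn hn0 le_rfl hn0 le_rfl
  have m4 : x*y*y*1 ≤ nn^4 := mono4 hx0 hxn hy0 hyn hy0 hyn h01 h1n
  have m5 : x*y*y*nn ≤ nn^4 := mono4 hx0 hxn hy0 hyn hy0 hyn hn0 le_rfl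
  have m6 : x*x*y*1 ≤ nn^4 := mono4 hx0 hxn hx0 hxn hy0 hyn h01 h1n
  have m7 : x*x*y*nn ≤ nn^4 := mono4 hx0 hxn hx0 hxn hy0 hyn hn0 le_rfl
  have m8 : x*x*x*1 ≤ nn^4 := mono4 hx0 hxn hx0 hxn hx0 hxn h01 h1n
  have m9 : x*x*x*nn ≤ nn^4 := mono4 hx0 hxn hx0 hxn hx0 hxn hn0 le_rfl
  have p1 : (0:ℝ) ≤ x*nn*nn*1 := by positivity
  have p2 : (0:ℝ) ≤ x*y*nn*1 := by positivity
  have p3 : (0:ℝ) ≤ x*y*nn*nn := by positivity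
  have p4 : (0:ℝ) ≤ x*y*y*1 := by positivity
  have p5 : (0:ℝ) ≤ x*y*y*nn := by positivity
  have p6 : (0:ℝ) ≤ x*x*y*1 := by positivity
  have p7 : (0:ℝ) ≤ x*x*y*nn := by positivity
  have p8 : (0:ℝ) ≤ x*x*x*1 := by positivity
  have p9 : (0:ℝ) ≤ x*x*x*nn := by positivity
  rw [abs_le]
  constructor
  · linarith [m1, m2, m3, m4, m5, m6, m7, m8, m9, p1, p2, p3, p4, p5, p6, p7, p8, p9]
  · linarith [m1, m2, m3, m4, m5, m6, m7, m8, m9, p1, p2, p3, p4, p5, p6, p7, p8, p9]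

lemma N2bound (x y nn : ℝ) (hx0 : 0 ≤ x) (hxn : x ≤ nn) (hy0 : 0 ≤ y) (hyn : y ≤ nn)
    (h1n : 1 ≤ nn) :
    |(-4)*nn^3 + 4*nn^4 - 4*y*nn^2 + 12*y^2*nn - 12*y^2*nn^2 - 4*y^3 + 8*y^3*nn
      - 24*x*y*nn + 36*x*y*nn^2 + 12*x*y^2 - 24*x*y^2*nn + 12*x^2*nn - 12*x^2*nn^2|
      ≤ 168 * nn^4 := by
  have hn0 : (0:ℝ) ≤ nn := by linarith
  have h01 : (0:ℝ) ≤ 1 := by norm_num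
  have m1 : nn*nn*nn*1 ≤ nn^4 := mono4 hn0 le_rfl hn0 le_rfl hn0 le_rfl h01 h1n
  have m2 : y*nn*nn*1 ≤ nn^4 := mono4 hy0 hyn hn0 le_rfl hn0 le_rfl h01 h1n
  have m3 : y*y*nn*1 ≤ nn^4 := mono4 hy0 hyn hy0 hyn hn0 le_rfl h01 h1n
  have m4 : y*y*nn*nn ≤ nn^4 := mono4 hy0 hyn hy0 hyn hn0 le_rfl hn0 le_rfl
  have m5 : y*y*y*1 ≤ nn^4 := mono4 hy0 hyn hy0 hyn hy0 hyn h01 h1n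
  have m6 : y*y*y*nn ≤ nn^4 := mono4 hy0 hyn hy0 hyn hy0 hyn hn0 le_rfl
  have m7 : x*y*nn*1 ≤ nn^4 := mono4 hx0 hxn hy0 hyn hn0 le_rfl h01 h1n
  have m8 : x*y*nn*nn ≤ nn^4 := mono4 hx0 hxn hy0 hyn hn0 le_rfl hn0 le_rfl
  have m9 : x*y*y*1 ≤ nn^4 := mono4 hx0 hxn hy0 hyn hy0 hyn h01 h1n
  have m10 : x*y*y*nn ≤ nn^4 := mono4 hx0 hxn hy0 hyn hy0 hyn hn0 le_rfl
  have m11 : x*x*nn*1 ≤ nn^4 := mono4 hx0 hxn hx0 hxn hn0 le_rfl h01 h1n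
  have m12 : x*x*nn*nn ≤ nn^4 := mono4 hx0 hxn hx0 hxn hn0 le_rfl hn0 le_rfl
  have p1 : (0:ℝ) ≤ nn*nn*nn*1 := by positivity
  have p2 : (0:ℝ) ≤ y*nn*nn*1 := by positivity
  have p3 : (0:ℝ) ≤ y*y*nn*1 := by positivity
  have p4 : (0:ℝ) ≤ y*y*nn*nn := by positivity
  have p5 : (0:ℝ) ≤ y*y*y*1 := by positivity
  have p6 : (0:ℝ) ≤ y*y*y*nn := by positivity
  have p7 : (0:ℝ) ≤ x*y*nn*1 := by positivity
  have p8 : (0:ℝ) ≤ x*y*nn*nn := by positivity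
  have p9 : (0:ℝ) ≤ x*y*y*1 := by positivity
  have p10 : (0:ℝ) ≤ x*y*y*nn := by positivity
  have p11 : (0:ℝ) ≤ x*x*nn*1 := by positivity
  have p12 : (0:ℝ) ≤ x*x*nn*nn := by positivity
  have hnn4 : (0:ℝ) ≤ nn^4 := by positivity
  rw [abs_le]
  constructor
  · linarith [m1, m2, m3, m4, m5, m6, m7, m8, m9, m10, m11, m12,
      p1, p2, p3, p4, p5, p6, p7, p8, p9, p10, p11, p12, hnn4]
  · linarith [m1, m2, m3, m4, m5, m6, m7, m8, m9, m10, m11, m12,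
      p1, p2, p3, p4, p5, p6, p7, p8, p9, p10, p11, p12, hnn4]

lemma approx1 (nr A B Sz : ℝ) (hn2 : 2 ≤ nr)
    (h6 : 6 * Sz = 24*A*B*nr - 12*A*B*(B+1) - 12*B*A*(A+1)
        + 2*(A*(A+1)*(2*A+1) + 3*(B-A)*A*(A+1)))
    (hA0 : 0 ≤ A) (hAB : A ≤ B) (hBn : B ≤ nr) :
    |nr * (Sz * (4/(nr^2-nr)^2)) - f1 (A/nr) (B/nr)| ≤ 310 * nr⁻¹ := by
  have hn0 : (0:ℝ) < nr := by linarith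
  have hn0' : nr ≠ 0 := ne_of_gt hn0
  have hn1 : nr - 1 ≠ 0 := by intro h; nlinarith
  have hD : nr^2 - nr ≠ 0 := by intro h; nlinarith
  have hSz : Sz = (24*A*B*nr - 12*A*B*(B+1) - 12*B*A*(A+1)
      + 2*(A*(A+1)*(2*A+1) + 3*(B-A)*A*(A+1))) / 6 := by linarith
  have key : nr * (Sz * (4/(nr^2-nr)^2)) - f1 (A/nr) (B/nr)
      = (4*A*nr^2 - 48*A*B*nr + 60*A*B*nr^2 + 24*A*B^2 - 48*A*B^2*nr + 12*A^2*B
          - 24*A^2*B*nr + 4*A^3 - 8*A^3*nr) / (3*nr^3*(nr-1)^2) := by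
    rw [hSz]; unfold f1; field_simp; ring
  have hden : (0:ℝ) < 3*nr^3*(nr-1)^2 := by
    have : (0:ℝ) < nr - 1 := by linarith
    positivity
  rw [key, abs_div, abs_of_pos hden, div_le_iff₀ hden]
  have hNb := N1bound A B nr hA0 (hAB.trans hBn) (hA0.trans hAB) hBn (by linarith)
  have e : 310 * nr⁻¹ * (3*nr^3*(nr-1)^2) = 930*(nr^2*(nr-1)^2) := by
    field_simp; ring
  rw [e]
  have h4 : nr^2 ≤ 4*(nr-1)^2 := by nlinarith
  have h5 : 232*nr^4 ≤ 928*(nr^2*(nr-1)^2) := by nlinarith [sq_nonneg nr, mul_le_mul_of_nonneg_left h4 (show (0:ℝ) ≤ 232*nr^2 by positivity)]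
  have h6' : (0:ℝ) ≤ nr^2*(nr-1)^2 := by positivity
  linarith [hNb]

lemma approx2 (nr A B Sz : ℝ) (hn2 : 2 ≤ nr)
    (h6 : 6 * Sz = 24*A*B*nr - 12*A*B*(B+1) - 12*B*A*(A+1)
        + 2*(A*(A+1)*(2*A+1) + 3*(B-A)*A*(A+1))
        + 2*(A+B-nr)*(A+B-nr+1)*(A+B-nr+2))
    (hA0 : 0 ≤ A) (hAB : A ≤ B) (hBn : B ≤ nr) :
    |nr * (Sz * (4/(nr^2-nr)^2)) - f2 (A/nr) (B/nr)| ≤ 224 * nr⁻¹ := by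
  have hn0 : (0:ℝ) < nr := by linarith
  have hn0' : nr ≠ 0 := ne_of_gt hn0
  have hn1 : nr - 1 ≠ 0 := by intro h; nlinarith
  have hD : nr^2 - nr ≠ 0 := by intro h; nlinarith
  have hSz : Sz = (24*A*B*nr - 12*A*B*(B+1) - 12*B*A*(A+1)
      + 2*(A*(A+1)*(2*A+1) + 3*(B-A)*A*(A+1))
      + 2*(A+B-nr)*(A+B-nr+1)*(A+B-nr+2)) / 6 := by linarith
  have key : nr * (Sz * (4/(nr^2-nr)^2)) - f2 (A/nr) (B/nr)
      = ((-4)*nr^3 + 4*nr^4 - 4*B*nr^2 + 12*B^2*nr - 12*B^2*nr^2 - 4*B^3 + 8*B^3*nr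
          - 24*A*B*nr + 36*A*B*nr^2 + 12*A*B^2 - 24*A*B^2*nr + 12*A^2*nr - 12*A^2*nr^2)
        / (3*nr^3*(nr-1)^2) := by
    rw [hSz]; unfold f2; field_simp; ring
  have hden : (0:ℝ) < 3*nr^3*(nr-1)^2 := by
    have : (0:ℝ) < nr - 1 := by linarith
    positivity
  rw [key, abs_div, abs_of_pos hden, div_le_iff₀ hden]
  have hNb := N2bound A B nr hA0 (hAB.trans hBn) (hA0.trans hAB) hBn (by linarith)
  have e : 224 * nr⁻¹ * (3*nr^3*(nr-1)^2) = 672*(nr^2*(nr-1)^2) := by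
    field_simp; ring
  rw [e]
  have h4 : nr^2 ≤ 4*(nr-1)^2 := by nlinarith
  have h5 : 168*nr^4 ≤ 672*(nr^2*(nr-1)^2) := by nlinarith [sq_nonneg nr, mul_le_mul_of_nonneg_left h4 (show (0:ℝ) ≤ 168*nr^2 by positivity)]
  linarith [hNb]

set_option maxHeartbeats 1000000 in
lemma main (n : ℕ) (hn : 2 ≤ n) (s t : ℝ) (hs0 : 0 ≤ s) (hs1 : s ≤ 1)
    (ht0 : 0 ≤ t) (ht1 : t ≤ 1) (hst : s ≤ t) :
    |(n:ℝ) * (∑ i ∈ Finset.Icc 1 n, nu n i s * nu n i t)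
        - (if s + t ≤ 1 then f1 s t else f2 s t)| ≤ 400 * (n:ℝ)⁻¹ := by
  have hn2 : (2:ℝ) ≤ (n:ℝ) := by exact_mod_cast hn
  have hn0 : (0:ℝ) < n := by linarith
  have hn0' : ((n:ℝ)) ≠ 0 := ne_of_gt hn0
  have hD : ((n:ℝ)^2 - n) ≠ 0 := by nlinarith
  have hinv : (0:ℝ) < ((n:ℝ))⁻¹ := by positivity
  set a : ℤ := ⌊(n:ℝ)*s⌋ with hadef
  set b : ℤ := ⌊(n:ℝ)*t⌋ with hbdef
  have ha0 : (0:ℤ) ≤ a := Int.floor_nonneg.mpr (by positivity)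
  have hab : a ≤ b := Int.floor_le_floor (by nlinarith)
  have hbn : b ≤ (n:ℤ) := by
    calc b ≤ ⌊(n:ℝ)⌋ := Int.floor_le_floor (by nlinarith)
      _ = (n:ℤ) := Int.floor_natCast n
  have haR : ((a:ℤ):ℝ) ≤ (n:ℝ)*s := Int.floor_le _
  have haR' : (n:ℝ)*s < ((a:ℤ):ℝ) + 1 := Int.lt_floor_add_one _
  have hbR : ((b:ℤ):ℝ) ≤ (n:ℝ)*t := Int.floor_le _
  have hbR' : (n:ℝ)*t < ((b:ℤ):ℝ) + 1 := Int.lt_floor_add_one _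
  have hterm : ∀ i ∈ Finset.Icc 1 n, nu n i s * nu n i t
      = (((min a ((i:ℤ)-1) + min a ((n:ℤ)-i)) * (min b ((i:ℤ)-1) + min b ((n:ℤ)-i)) : ℤ) : ℝ)
        * (4/((n:ℝ)^2-(n:ℝ))^2) := by
    intro i _
    unfold nu
    rw [← hadef, ← hbdef]
    push_cast
    field_simp
    ring
  set Sz : ℤ := ∑ i ∈ Finset.Icc 1 n,
      (min a ((i:ℤ)-1) + min a ((n:ℤ)-i)) * (min b ((i:ℤ)-1) + min b ((n:ℤ)-i)) with hSzdef
  have hsum : (∑ i ∈ Finset.Icc 1 n, nu n i s * nu n i t)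
      = ((Sz:ℤ):ℝ) * (4/((n:ℝ)^2-(n:ℝ))^2) := by
    rw [Finset.sum_congr rfl hterm, ← Finset.sum_mul, hSzdef]
    push_cast
    ring
  have hm := master n a b ha0 hab hbn
  rw [← hSzdef] at hm
  clear_value a b Sz
  -- facts about σ = a/n, τ = b/n
  have hσ0 : (0:ℝ) ≤ ((a:ℤ):ℝ)/(n:ℝ) := by
    apply div_nonneg _ hn0.le; exact_mod_cast ha0
  have hτ0 : (0:ℝ) ≤ ((b:ℤ):ℝ)/(n:ℝ) := by
    apply div_nonneg _ hn0.le
    have : (0:ℤ) ≤ b := le_trans ha0 hab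
    exact_mod_cast this
  have hσs : ((a:ℤ):ℝ)/(n:ℝ) ≤ s := by rw [div_le_iff₀ hn0]; linarith
  have hτt : ((b:ℤ):ℝ)/(n:ℝ) ≤ t := by rw [div_le_iff₀ hn0]; linarith
  have hsσ : s ≤ ((a:ℤ):ℝ)/(n:ℝ) + ((n:ℝ))⁻¹ := by
    have e : ((a:ℤ):ℝ)/(n:ℝ) + ((n:ℝ))⁻¹ = (((a:ℤ):ℝ)+1)/(n:ℝ) := by field_simp
    rw [e, le_div_iff₀ hn0]; nlinarith
  have htτ : t ≤ ((b:ℤ):ℝ)/(n:ℝ) + ((n:ℝ))⁻¹ := by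
    have e : ((b:ℤ):ℝ)/(n:ℝ) + ((n:ℝ))⁻¹ = (((b:ℤ):ℝ)+1)/(n:ℝ) := by field_simp
    rw [e, le_div_iff₀ hn0]; nlinarith
  have hA0' : (0:ℝ) ≤ ((a:ℤ):ℝ) := by exact_mod_cast ha0
  have hAB' : ((a:ℤ):ℝ) ≤ ((b:ℤ):ℝ) := by exact_mod_cast hab
  have hBn' : ((b:ℤ):ℝ) ≤ (n:ℝ) := by exact_mod_cast hbn
  rw [hsum]
  rcases le_or_gt (a + b) (n:ℤ) with hcase | hcase
  · -- low case : M = 0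
    rw [max_eq_right (by omega : a + b - (n:ℤ) ≤ 0)] at hm
    have hm' : 6 * Sz = 24*a*b*(n:ℤ) - 12*a*b*(b+1) - 12*b*a*(a+1)
        + 2*(a*(a+1)*(2*a+1) + 3*(b-a)*a*(a+1)) := by linear_combination hm
    have hmR : 6 * ((Sz:ℤ):ℝ) = 24*((a:ℤ):ℝ)*((b:ℤ):ℝ)*(n:ℝ) - 12*((a:ℤ):ℝ)*((b:ℤ):ℝ)*(((b:ℤ):ℝ)+1)
        - 12*((b:ℤ):ℝ)*((a:ℤ):ℝ)*(((a:ℤ):ℝ)+1)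
        + 2*(((a:ℤ):ℝ)*(((a:ℤ):ℝ)+1)*(2*((a:ℤ):ℝ)+1)
            + 3*(((b:ℤ):ℝ)-((a:ℤ):ℝ))*((a:ℤ):ℝ)*(((a:ℤ):ℝ)+1)) := by
      have hmC := congrArg (fun z : ℤ => (z : ℝ)) hm'
      push_cast at hmC
      linear_combination hmC
    have h1 := approx1 (n:ℝ) ((a:ℤ):ℝ) ((b:ℤ):ℝ) ((Sz:ℤ):ℝ) hn2 hmR hA0' hAB' hBn'
    have hL := lip1 s t (((a:ℤ):ℝ)/(n:ℝ)) (((b:ℤ):ℝ)/(n:ℝ)) ((n:ℝ))⁻¹ hinv.le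
      hσ0 hσs hs1 hsσ hτ0 hτt ht1 htτ
    by_cases hb1 : s + t ≤ 1
    · rw [if_pos hb1]
      calc |(n:ℝ) * (((Sz:ℤ):ℝ) * (4/((n:ℝ)^2-(n:ℝ))^2)) - f1 s t|
          ≤ |(n:ℝ) * (((Sz:ℤ):ℝ) * (4/((n:ℝ)^2-(n:ℝ))^2)) - f1 (((a:ℤ):ℝ)/(n:ℝ)) (((b:ℤ):ℝ)/(n:ℝ))|
            + |f1 (((a:ℤ):ℝ)/(n:ℝ)) (((b:ℤ):ℝ)/(n:ℝ)) - f1 s t| := abs_sub_le _ _ _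
        _ ≤ 310 * ((n:ℝ))⁻¹ + 72 * ((n:ℝ))⁻¹ := by
            refine add_le_add h1 ?_
            rw [abs_sub_comm]; exact hL
        _ ≤ 400 * ((n:ℝ))⁻¹ := by linarith
    · rw [if_neg hb1]
      push_neg at hb1
      have hcR : ((a:ℤ):ℝ) + ((b:ℤ):ℝ) ≤ (n:ℝ) := by exact_mod_cast hcase
      have hs2 : s + t ≤ 1 + 2 * ((n:ℝ))⁻¹ := by
        have h3 : ((a:ℤ):ℝ)/(n:ℝ) + ((b:ℤ):ℝ)/(n:ℝ) ≤ 1 := by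
          rw [← add_div, div_le_one hn0]; linarith
        linarith
      have hbd := branchdiff s t ((n:ℝ))⁻¹ hs1 ht1 hb1 hs2 hinv
      calc |(n:ℝ) * (((Sz:ℤ):ℝ) * (4/((n:ℝ)^2-(n:ℝ))^2)) - f2 s t|
          ≤ |(n:ℝ) * (((Sz:ℤ):ℝ) * (4/((n:ℝ)^2-(n:ℝ))^2)) - f1 (((a:ℤ):ℝ)/(n:ℝ)) (((b:ℤ):ℝ)/(n:ℝ))|
            + |f1 (((a:ℤ):ℝ)/(n:ℝ)) (((b:ℤ):ℝ)/(n:ℝ)) - f2 s t| := abs_sub_le _ _ _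
        _ ≤ 310 * ((n:ℝ))⁻¹ + (|f1 (((a:ℤ):ℝ)/(n:ℝ)) (((b:ℤ):ℝ)/(n:ℝ)) - f1 s t|
            + |f1 s t - f2 s t|) := add_le_add h1 (abs_sub_le _ _ _)
        _ ≤ 310 * ((n:ℝ))⁻¹ + (72 * ((n:ℝ))⁻¹ + 3 * ((n:ℝ))⁻¹) := by
            refine add_le_add le_rfl (add_le_add ?_ hbd)
            rw [abs_sub_comm]; exact hL
        _ ≤ 400 * ((n:ℝ))⁻¹ := by linarith
  · -- high case
    rw [max_eq_left (by omega : (0:ℤ) ≤ a + b - (n:ℤ))] at hm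
    have hmR : 6 * ((Sz:ℤ):ℝ) = 24*((a:ℤ):ℝ)*((b:ℤ):ℝ)*(n:ℝ) - 12*((a:ℤ):ℝ)*((b:ℤ):ℝ)*(((b:ℤ):ℝ)+1)
        - 12*((b:ℤ):ℝ)*((a:ℤ):ℝ)*(((a:ℤ):ℝ)+1)
        + 2*(((a:ℤ):ℝ)*(((a:ℤ):ℝ)+1)*(2*((a:ℤ):ℝ)+1)
            + 3*(((b:ℤ):ℝ)-((a:ℤ):ℝ))*((a:ℤ):ℝ)*(((a:ℤ):ℝ)+1))
        + 2*(((a:ℤ):ℝ)+((b:ℤ):ℝ)-(n:ℝ))*(((a:ℤ):ℝ)+((b:ℤ):ℝ)-(n:ℝ)+1)*(((a:ℤ):ℝ)+((b:ℤ):ℝ)-(n:ℝ)+2) := by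
      have hm' : 6 * Sz = 24*a*b*(n:ℤ) - 12*a*b*(b+1) - 12*b*a*(a+1)
          + 2*(a*(a+1)*(2*a+1) + 3*(b-a)*a*(a+1))
          + 2*(a+b-(n:ℤ))*(a+b-(n:ℤ)+1)*(a+b-(n:ℤ)+2) := by linear_combination hm
      have hmC := congrArg (fun z : ℤ => (z : ℝ)) hm'
      push_cast at hmC
      linear_combination hmC
    have h1 := approx2 (n:ℝ) ((a:ℤ):ℝ) ((b:ℤ):ℝ) ((Sz:ℤ):ℝ) hn2 hmR hA0' hAB' hBn'
    have hL := lip2 s t (((a:ℤ):ℝ)/(n:ℝ)) (((b:ℤ):ℝ)/(n:ℝ)) ((n:ℝ))⁻¹ hinv.le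
      hσ0 hσs hs1 hsσ hτ0 hτt ht1 htτ
    have hcR : (n:ℝ) + 1 ≤ ((a:ℤ):ℝ) + ((b:ℤ):ℝ) := by
      have h9 : (n:ℤ) + 1 ≤ a + b := by omega
      exact_mod_cast h9
    have hst1 : ¬ (s + t ≤ 1) := by
      push_neg
      nlinarith
    rw [if_neg hst1]
    calc |(n:ℝ) * (((Sz:ℤ):ℝ) * (4/((n:ℝ)^2-(n:ℝ))^2)) - f2 s t|
        ≤ |(n:ℝ) * (((Sz:ℤ):ℝ) * (4/((n:ℝ)^2-(n:ℝ))^2)) - f2 (((a:ℤ):ℝ)/(n:ℝ)) (((b:ℤ):ℝ)/(n:ℝ))|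
          + |f2 (((a:ℤ):ℝ)/(n:ℝ)) (((b:ℤ):ℝ)/(n:ℝ)) - f2 s t| := abs_sub_le _ _ _
      _ ≤ 224 * ((n:ℝ))⁻¹ + 72 * ((n:ℝ))⁻¹ := by
          refine add_le_add h1 ?_
          rw [abs_sub_comm]; exact hL
      _ ≤ 400 * ((n:ℝ))⁻¹ := by linarith

theorem covariance_approximation :
    ∃ C : ℝ, 0 < C ∧ ∀ n : ℕ, 2 ≤ n → ∀ s ∈ Set.Icc (0:ℝ) 1, ∀ t ∈ Set.Icc (0:ℝ) 1,
      |(n : ℝ) * (∑ i ∈ Finset.Icc 1 n, nu n i s * nu n i t) - Gam s t| ≤ C * (n : ℝ)⁻¹ := by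
  refine ⟨400, by norm_num, ?_⟩
  intro n hn s hs t ht
  obtain ⟨hs0, hs1⟩ := hs
  obtain ⟨ht0, ht1⟩ := ht
  rcases le_total s t with hst | hst
  · have h := main n hn s t hs0 hs1 ht0 ht1 hst
    have hg : Gam s t = if s + t ≤ 1 then f1 s t else f2 s t := by
      unfold Gam f1 f2
      rw [if_pos hst]
    rw [hg]; exact h
  · have h := main n hn t s ht0 ht1 hs0 hs1 hst
    have hsum : ∑ i ∈ Finset.Icc 1 n, nu n i s * nu n i t
        = ∑ i ∈ Finset.Icc 1 n, nu n i t * nu n i s :=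
      Finset.sum_congr rfl (fun i _ => mul_comm _ _)
    rw [hsum]
    have hg : Gam s t = if t + s ≤ 1 then f1 t s else f2 t s := by
      unfold Gam f1 f2
      rcases lt_or_ge t s with hlt | hle
      · rw [if_neg (not_le.mpr hlt)]
      · have heq : s = t := le_antisymm hle hst
        subst heq
        rw [if_pos le_rfl]
    rw [hg]; exact h
end

section
/- With ν_{ni}⋄(t) = ν_{ni}(t) − 2n⁻¹u_n(t), for all s,t ∈ [0,1], |n Σ_{i=1}^n ν_{ni}⋄(s)ν_{ni}⋄(t) − {Γ(s,t) − 4u_∞(s)u_∞(t)}| ≤ C n⁻¹ for an absolute constant C, where u_∞(t) = t(2−t) and Γ is as in Lemma 1. -/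
set_option maxHeartbeats 4000000

open Finset

lemma gauss_sum (m : ℕ) : 2 * ∑ j ∈ Finset.range m, (j:ℤ) = m * (m-1) := by
  induction m with
  | zero => simp
  | succ p ih => rw [Finset.sum_range_succ, mul_add, ih]; push_cast; ring

lemma sq_sum (m : ℕ) : 6 * ∑ j ∈ Finset.range m, (j:ℤ)^2 = m * (m-1) * (2*m-1) := by
  induction m with
  | zero => simp
  | succ p ih => rw [Finset.sum_range_succ, mul_add, ih]; push_cast; ring

lemma A_form (k l n : ℕ) (hkl : k ≤ l) (hln : l ≤ n) :
    6 * ∑ j ∈ Finset.range n, (min (k:ℤ) (j:ℤ) * min (l:ℤ) (j:ℤ)) =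
      (k:ℤ)*((k:ℤ)-1)*(2*(k:ℤ)-1) + 3*(k:ℤ)*((l:ℤ)*((l:ℤ)-1)-(k:ℤ)*((k:ℤ)-1))
        + 6*(k:ℤ)*(l:ℤ)*((n:ℤ)-(l:ℤ)) := by
  have hkn : k ≤ n := hkl.trans hln
  rw [Finset.range_eq_Ico, ← Finset.sum_Ico_consecutive _ (Nat.zero_le k) hkn,
      ← Finset.sum_Ico_consecutive _ hkl hln]
  have e1 : ∑ j ∈ Finset.Ico 0 k, (min (k:ℤ) (j:ℤ) * min (l:ℤ) (j:ℤ))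
      = ∑ j ∈ Finset.range k, (j:ℤ)^2 := by
    rw [← Finset.range_eq_Ico]
    refine Finset.sum_congr rfl fun j hj => ?_
    have hj' := Finset.mem_range.mp hj
    rw [min_eq_right (by omega : (j:ℤ) ≤ (k:ℤ)), min_eq_right (by omega : (j:ℤ) ≤ (l:ℤ)), sq]
  have e2 : ∑ j ∈ Finset.Ico k l, (min (k:ℤ) (j:ℤ) * min (l:ℤ) (j:ℤ))
      = (k:ℤ) * (∑ j ∈ Finset.range l, (j:ℤ) - ∑ j ∈ Finset.range k, (j:ℤ)) := by
    rw [← Finset.sum_Ico_eq_sub _ hkl, Finset.mul_sum]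
    refine Finset.sum_congr rfl fun j hj => ?_
    obtain ⟨h1, h2⟩ := Finset.mem_Ico.mp hj
    rw [min_eq_left (by omega : (k:ℤ) ≤ (j:ℤ)), min_eq_right (by omega : (j:ℤ) ≤ (l:ℤ))]
  have e3 : ∑ j ∈ Finset.Ico l n, (min (k:ℤ) (j:ℤ) * min (l:ℤ) (j:ℤ))
      = (n - l : ℕ) * ((k:ℤ) * (l:ℤ)) := by
    have h1 : ∑ j ∈ Finset.Ico l n, (min (k:ℤ) (j:ℤ) * min (l:ℤ) (j:ℤ))
        = ∑ _j ∈ Finset.Ico l n, ((k:ℤ) * (l:ℤ)) := by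
      refine Finset.sum_congr rfl fun j hj => ?_
      obtain ⟨h1, h2⟩ := Finset.mem_Ico.mp hj
      rw [min_eq_left (by omega : (k:ℤ) ≤ (j:ℤ)), min_eq_left (by omega : (l:ℤ) ≤ (j:ℤ))]
    rw [h1, Finset.sum_const, Nat.card_Ico, nsmul_eq_mul]
  rw [e1, e2, e3]
  have g1 := sq_sum k
  have g2 := gauss_sum l
  have g3 := gauss_sum k
  have hc : ((n - l : ℕ) : ℤ) = (n:ℤ) - (l:ℤ) := by omega
  rw [hc]
  linear_combination g1 + 3*(k:ℤ)*g2 - 3*(k:ℤ)*g3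

lemma B1_form (k l n : ℕ) (hkl : k ≤ l) (hln : l ≤ n) (h : k + l ≤ n) :
    6 * ∑ j ∈ Finset.range n, (min (k:ℤ) (j:ℤ) * min (l:ℤ) ((n:ℤ)-1-(j:ℤ))) =
      3*(l:ℤ)*(k:ℤ)*((k:ℤ)-1) + 6*(k:ℤ)*(l:ℤ)*((n:ℤ)-(k:ℤ)-(l:ℤ)) + 3*(k:ℤ)*(l:ℤ)*((l:ℤ)-1) := by
  have hknl : k ≤ n - l := by omega
  have hnln : n - l ≤ n := by omega
  rw [Finset.range_eq_Ico, ← Finset.sum_Ico_consecutive _ (Nat.zero_le (n-l)) hnln,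
      ← Finset.sum_Ico_consecutive _ (Nat.zero_le k) hknl]
  have e1 : ∑ j ∈ Finset.Ico 0 k, (min (k:ℤ) (j:ℤ) * min (l:ℤ) ((n:ℤ)-1-(j:ℤ)))
      = (∑ j ∈ Finset.range k, (j:ℤ)) * (l:ℤ) := by
    rw [← Finset.range_eq_Ico, Finset.sum_mul]
    refine Finset.sum_congr rfl fun j hj => ?_
    have hj' := Finset.mem_range.mp hj
    rw [min_eq_right (by omega : (j:ℤ) ≤ (k:ℤ)), min_eq_left (by omega : (l:ℤ) ≤ (n:ℤ)-1-(j:ℤ))]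
  have e2 : ∑ j ∈ Finset.Ico k (n-l), (min (k:ℤ) (j:ℤ) * min (l:ℤ) ((n:ℤ)-1-(j:ℤ)))
      = ((n-l-k : ℕ) : ℤ) * ((k:ℤ) * (l:ℤ)) := by
    have h1 : ∑ j ∈ Finset.Ico k (n-l), (min (k:ℤ) (j:ℤ) * min (l:ℤ) ((n:ℤ)-1-(j:ℤ)))
        = ∑ _j ∈ Finset.Ico k (n-l), ((k:ℤ) * (l:ℤ)) := by
      refine Finset.sum_congr rfl fun j hj => ?_
      obtain ⟨h1, h2⟩ := Finset.mem_Ico.mp hj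
      rw [min_eq_left (by omega : (k:ℤ) ≤ (j:ℤ)), min_eq_left (by omega : (l:ℤ) ≤ (n:ℤ)-1-(j:ℤ))]
    rw [h1, Finset.sum_const, Nat.card_Ico, nsmul_eq_mul]
  have e3 : ∑ j ∈ Finset.Ico (n-l) n, (min (k:ℤ) (j:ℤ) * min (l:ℤ) ((n:ℤ)-1-(j:ℤ)))
      = (k:ℤ) * (((l:ℕ):ℤ) * ((n:ℤ)-1) - (∑ j ∈ Finset.range n, (j:ℤ) - ∑ j ∈ Finset.range (n-l), (j:ℤ))) := by
    have : ∑ j ∈ Finset.Ico (n-l) n, (min (k:ℤ) (j:ℤ) * min (l:ℤ) ((n:ℤ)-1-(j:ℤ)))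
        = ∑ j ∈ Finset.Ico (n-l) n, ((k:ℤ) * ((n:ℤ)-1) - (k:ℤ) * (j:ℤ)) := by
      refine Finset.sum_congr rfl fun j hj => ?_
      obtain ⟨h1, h2⟩ := Finset.mem_Ico.mp hj
      rw [min_eq_left (by omega : (k:ℤ) ≤ (j:ℤ)), min_eq_right (by omega : (n:ℤ)-1-(j:ℤ) ≤ (l:ℤ))]
      ring
    rw [this, Finset.sum_sub_distrib, Finset.sum_const, Nat.card_Ico, nsmul_eq_mul,
      ← Finset.mul_sum, Finset.sum_Ico_eq_sub _ hnln]
    have hc : ((n - (n-l) : ℕ) : ℤ) = (l:ℤ) := by omega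
    rw [hc]
    ring
  rw [e1, e2, e3]
  have g1 := gauss_sum k
  have g2 := gauss_sum n
  have g3 := gauss_sum (n-l)
  have hc1 : ((n-l-k : ℕ) : ℤ) = (n:ℤ) - (l:ℤ) - (k:ℤ) := by omega
  have hc2 : ((n-l : ℕ) : ℤ) = (n:ℤ) - (l:ℤ) := by omega
  rw [hc1]
  rw [hc2] at g3
  linear_combination 3*(l:ℤ)*g1 - 3*(k:ℤ)*g2 + 3*(k:ℤ)*g3

lemma B2_form (k l n : ℕ) (hkl : k ≤ l) (hln : l ≤ n) (h : n ≤ k + l) :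
    6 * ∑ j ∈ Finset.range n, (min (k:ℤ) (j:ℤ) * min (l:ℤ) ((n:ℤ)-1-(j:ℤ))) =
      3*(l:ℤ)*((n:ℤ)-(l:ℤ))*((n:ℤ)-(l:ℤ)-1)
      + (3*((n:ℤ)-1)*((k:ℤ)*((k:ℤ)-1)-((n:ℤ)-(l:ℤ))*((n:ℤ)-(l:ℤ)-1))
          - ((k:ℤ)*((k:ℤ)-1)*(2*(k:ℤ)-1) - ((n:ℤ)-(l:ℤ))*((n:ℤ)-(l:ℤ)-1)*(2*((n:ℤ)-(l:ℤ))-1)))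
      + 3*(k:ℤ)*((n:ℤ)-(k:ℤ))*((n:ℤ)-(k:ℤ)-1) := by
  have hkn : k ≤ n := hkl.trans hln
  have hnlk : n - l ≤ k := by omega
  rw [Finset.range_eq_Ico, ← Finset.sum_Ico_consecutive _ (Nat.zero_le k) hkn,
      ← Finset.sum_Ico_consecutive _ (Nat.zero_le (n-l)) hnlk]
  have e1 : ∑ j ∈ Finset.Ico 0 (n-l), (min (k:ℤ) (j:ℤ) * min (l:ℤ) ((n:ℤ)-1-(j:ℤ)))
      = (∑ j ∈ Finset.range (n-l), (j:ℤ)) * (l:ℤ) := by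
    rw [← Finset.range_eq_Ico, Finset.sum_mul]
    refine Finset.sum_congr rfl fun j hj => ?_
    have hj' := Finset.mem_range.mp hj
    rw [min_eq_right (by omega : (j:ℤ) ≤ (k:ℤ)), min_eq_left (by omega : (l:ℤ) ≤ (n:ℤ)-1-(j:ℤ))]
  have e2 : ∑ j ∈ Finset.Ico (n-l) k, (min (k:ℤ) (j:ℤ) * min (l:ℤ) ((n:ℤ)-1-(j:ℤ)))
      = ((n:ℤ)-1) * (∑ j ∈ Finset.range k, (j:ℤ) - ∑ j ∈ Finset.range (n-l), (j:ℤ))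
        - (∑ j ∈ Finset.range k, (j:ℤ)^2 - ∑ j ∈ Finset.range (n-l), (j:ℤ)^2) := by
    have : ∑ j ∈ Finset.Ico (n-l) k, (min (k:ℤ) (j:ℤ) * min (l:ℤ) ((n:ℤ)-1-(j:ℤ)))
        = ∑ j ∈ Finset.Ico (n-l) k, (((n:ℤ)-1) * (j:ℤ) - (j:ℤ)^2) := by
      refine Finset.sum_congr rfl fun j hj => ?_
      obtain ⟨h1, h2⟩ := Finset.mem_Ico.mp hj
      rw [min_eq_right (by omega : (j:ℤ) ≤ (k:ℤ)), min_eq_right (by omega : (n:ℤ)-1-(j:ℤ) ≤ (l:ℤ))]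
      ring
    rw [this, Finset.sum_sub_distrib, ← Finset.mul_sum, Finset.sum_Ico_eq_sub _ hnlk,
      Finset.sum_Ico_eq_sub (fun j => (j:ℤ)^2) hnlk]
  have e3 : ∑ j ∈ Finset.Ico k n, (min (k:ℤ) (j:ℤ) * min (l:ℤ) ((n:ℤ)-1-(j:ℤ)))
      = (k:ℤ) * (((n-k:ℕ):ℤ) * ((n:ℤ)-1) - (∑ j ∈ Finset.range n, (j:ℤ) - ∑ j ∈ Finset.range k, (j:ℤ))) := by
    have : ∑ j ∈ Finset.Ico k n, (min (k:ℤ) (j:ℤ) * min (l:ℤ) ((n:ℤ)-1-(j:ℤ)))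
        = ∑ j ∈ Finset.Ico k n, ((k:ℤ) * ((n:ℤ)-1) - (k:ℤ) * (j:ℤ)) := by
      refine Finset.sum_congr rfl fun j hj => ?_
      obtain ⟨h1, h2⟩ := Finset.mem_Ico.mp hj
      rw [min_eq_left (by omega : (k:ℤ) ≤ (j:ℤ)), min_eq_right (by omega : (n:ℤ)-1-(j:ℤ) ≤ (l:ℤ))]
      ring
    rw [this, Finset.sum_sub_distrib, Finset.sum_const, Nat.card_Ico, nsmul_eq_mul,
      ← Finset.mul_sum, Finset.sum_Ico_eq_sub _ hkn]
    ring
  rw [e1, e2, e3]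
  have g1 := gauss_sum (n-l)
  have g2 := gauss_sum k
  have g3 := gauss_sum n
  have q1 := sq_sum k
  have q2 := sq_sum (n-l)
  have hc2 : ((n-l : ℕ) : ℤ) = (n:ℤ) - (l:ℤ) := by omega
  have hc3 : ((n-k : ℕ) : ℤ) = (n:ℤ) - (k:ℤ) := by omega
  rw [hc2] at g1 q2
  rw [hc3]
  linear_combination 3*(l:ℤ)*g1 + 3*((n:ℤ)-1)*g2 - 3*((n:ℤ)-1)*g1 - q1 + q2 - 3*(k:ℤ)*g3 + 3*(k:ℤ)*g2


lemma icc_to_range {M : Type*} [AddCommMonoid M] (n : ℕ) (f : ℕ → M) :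
    ∑ i ∈ Finset.Icc 1 n, f i = ∑ j ∈ Finset.range n, f (1+j) := by
  rw [← Finset.Ico_add_one_right_eq_Icc, Finset.sum_Ico_eq_sum_range]
  simp

lemma T_red (k l n : ℕ) :
    ∑ i ∈ Finset.Icc 1 n, ((min (k:ℤ) ((i:ℤ)-1) + min (k:ℤ) ((n:ℤ)-(i:ℤ)))
        * (min (l:ℤ) ((i:ℤ)-1) + min (l:ℤ) ((n:ℤ)-(i:ℤ))))
    = 2 * ∑ j ∈ Finset.range n, (min (k:ℤ) (j:ℤ) * min (l:ℤ) (j:ℤ))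
      + 2 * ∑ j ∈ Finset.range n, (min (k:ℤ) (j:ℤ) * min (l:ℤ) ((n:ℤ)-1-(j:ℤ))) := by
  rw [icc_to_range]
  have e : ∀ j ∈ Finset.range n,
      ((min (k:ℤ) (((1+j:ℕ):ℤ)-1) + min (k:ℤ) ((n:ℤ)-((1+j:ℕ):ℤ)))
        * (min (l:ℤ) (((1+j:ℕ):ℤ)-1) + min (l:ℤ) ((n:ℤ)-((1+j:ℕ):ℤ))))
      = (min (k:ℤ) (j:ℤ) * min (l:ℤ) (j:ℤ) + min (k:ℤ) (j:ℤ) * min (l:ℤ) ((n:ℤ)-1-(j:ℤ)))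
        + (min (k:ℤ) ((n:ℤ)-1-(j:ℤ)) * min (l:ℤ) (j:ℤ)
            + min (k:ℤ) ((n:ℤ)-1-(j:ℤ)) * min (l:ℤ) ((n:ℤ)-1-(j:ℤ))) := fun j hj => by
    have c1 : ((1+j:ℕ):ℤ) - 1 = (j:ℤ) := by push_cast; ring
    have c2 : (n:ℤ) - ((1+j:ℕ):ℤ) = (n:ℤ)-1-(j:ℤ) := by push_cast; ring
    rw [c1, c2]; ring
  rw [Finset.sum_congr rfl e, Finset.sum_add_distrib, Finset.sum_add_distrib,
    Finset.sum_add_distrib]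
  have r1 : ∑ j ∈ Finset.range n, (min (k:ℤ) ((n:ℤ)-1-(j:ℤ)) * min (l:ℤ) (j:ℤ))
      = ∑ j ∈ Finset.range n, (min (k:ℤ) (j:ℤ) * min (l:ℤ) ((n:ℤ)-1-(j:ℤ))) := by
    have e2 : ∀ j ∈ Finset.range n, (min (k:ℤ) ((n:ℤ)-1-(j:ℤ)) * min (l:ℤ) (j:ℤ))
        = (fun m : ℕ => min (k:ℤ) (m:ℤ) * min (l:ℤ) ((n:ℤ)-1-(m:ℤ))) (n-1-j) := fun j hj => by
      have hj' := Finset.mem_range.mp hj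
      simp only
      have c1 : ((n-1-j:ℕ):ℤ) = (n:ℤ)-1-(j:ℤ) := by omega
      rw [c1]
      have c2 : (n:ℤ)-1-((n:ℤ)-1-(j:ℤ)) = (j:ℤ) := by ring
      rw [c2]
    rw [Finset.sum_congr rfl e2,
      Finset.sum_range_reflect (fun m : ℕ => min (k:ℤ) (m:ℤ) * min (l:ℤ) ((n:ℤ)-1-(m:ℤ))) n]
  have r2 : ∑ j ∈ Finset.range n, (min (k:ℤ) ((n:ℤ)-1-(j:ℤ)) * min (l:ℤ) ((n:ℤ)-1-(j:ℤ)))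
      = ∑ j ∈ Finset.range n, (min (k:ℤ) (j:ℤ) * min (l:ℤ) (j:ℤ)) := by
    have e2 : ∀ j ∈ Finset.range n, (min (k:ℤ) ((n:ℤ)-1-(j:ℤ)) * min (l:ℤ) ((n:ℤ)-1-(j:ℤ)))
        = (fun m : ℕ => min (k:ℤ) (m:ℤ) * min (l:ℤ) (m:ℤ)) (n-1-j) := fun j hj => by
      have hj' := Finset.mem_range.mp hj
      simp only
      have c1 : ((n-1-j:ℕ):ℤ) = (n:ℤ)-1-(j:ℤ) := by omega
      rw [c1]
    rw [Finset.sum_congr rfl e2,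
      Finset.sum_range_reflect (fun m : ℕ => min (k:ℤ) (m:ℤ) * min (l:ℤ) (m:ℤ)) n]
  rw [r1, r2]; ring

lemma sum_m (k n : ℕ) (hkn : k ≤ n) :
    ∑ i ∈ Finset.Icc 1 n, (min (k:ℤ) ((i:ℤ)-1) + min (k:ℤ) ((n:ℤ)-(i:ℤ)))
      = (k:ℤ) * (2*(n:ℤ) - (k:ℤ) - 1) := by
  rw [icc_to_range]
  have e : ∀ j ∈ Finset.range n,
      (min (k:ℤ) (((1+j:ℕ):ℤ)-1) + min (k:ℤ) ((n:ℤ)-((1+j:ℕ):ℤ)))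
      = min (k:ℤ) (j:ℤ) + min (k:ℤ) ((n:ℤ)-1-(j:ℤ)) := fun j hj => by
    have c1 : ((1+j:ℕ):ℤ) - 1 = (j:ℤ) := by push_cast; ring
    have c2 : (n:ℤ) - ((1+j:ℕ):ℤ) = (n:ℤ)-1-(j:ℤ) := by push_cast; ring
    rw [c1, c2]
  rw [Finset.sum_congr rfl e, Finset.sum_add_distrib]
  have r1 : ∑ j ∈ Finset.range n, min (k:ℤ) ((n:ℤ)-1-(j:ℤ))
      = ∑ j ∈ Finset.range n, min (k:ℤ) (j:ℤ) := by
    have e2 : ∀ j ∈ Finset.range n, min (k:ℤ) ((n:ℤ)-1-(j:ℤ))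
        = (fun m : ℕ => min (k:ℤ) (m:ℤ)) (n-1-j) := fun j hj => by
      have hj' := Finset.mem_range.mp hj
      simp only
      have c1 : ((n-1-j:ℕ):ℤ) = (n:ℤ)-1-(j:ℤ) := by omega
      rw [c1]
    rw [Finset.sum_congr rfl e2, Finset.sum_range_reflect (fun m : ℕ => min (k:ℤ) (m:ℤ)) n]
  rw [r1]
  have split : ∑ j ∈ Finset.range n, min (k:ℤ) (j:ℤ)
      = ∑ j ∈ Finset.range k, (j:ℤ) + ((n-k:ℕ):ℤ) * (k:ℤ) := by
    rw [Finset.range_eq_Ico, ← Finset.sum_Ico_consecutive _ (Nat.zero_le k) hkn]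
    congr 1
    · rw [← Finset.range_eq_Ico]
      refine Finset.sum_congr rfl fun j hj => ?_
      have hj' := Finset.mem_range.mp hj
      exact min_eq_right (by omega)
    · have h1 : ∑ j ∈ Finset.Ico k n, min (k:ℤ) (j:ℤ) = ∑ _j ∈ Finset.Ico k n, (k:ℤ) := by
        refine Finset.sum_congr rfl fun j hj => ?_
        obtain ⟨h1, h2⟩ := Finset.mem_Ico.mp hj
        exact min_eq_left (by omega)
      rw [h1, Finset.sum_const, Nat.card_Ico, nsmul_eq_mul]
  rw [split]
  have g := gauss_sum k
  have hc : ((n-k:ℕ):ℤ) = (n:ℤ) - (k:ℤ) := by omega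
  rw [hc]
  linear_combination g


lemma bound1 (x s t a b : ℝ) (hx : 2 ≤ x)
    (hs0 : 0 ≤ s) (hs1 : s ≤ 1) (ht0 : 0 ≤ t) (ht1 : t ≤ 1)
    (ha0 : 0 ≤ a) (ha1 : a ≤ 1) (hb0 : 0 ≤ b) (hb1 : b ≤ 1) :
    |4*x*((x*s-a)*((x*s-a)-1)*(2*(x*s-a)-1) + 3*(x*s-a)*((x*t-b)*((x*t-b)-1)-(x*s-a)*((x*s-a)-1)) + 6*(x*s-a)*(x*t-b)*(x-(x*t-b)) + (3*(x*t-b)*(x*s-a)*((x*s-a)-1) + 6*(x*s-a)*(x*t-b)*(x-(x*s-a)-(x*t-b)) + 3*(x*s-a)*(x*t-b)*((x*t-b)-1))) - 3*(4*s*(4*t - 2*t^2 - s*t - s^2/3))*(x^2-x)^2| ≤ 800*x^3 := by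
  have hx0 : (0:ℝ) ≤ x := by linarith
  have hx1 : (1:ℝ) ≤ x := by linarith
  have hp2 : x^2 ≤ x^3 := by nlinarith [mul_nonneg (mul_nonneg hx0 hx0) (by linarith : (0:ℝ) ≤ x - 1)]
  have hp1 : x ≤ x^3 := by nlinarith [mul_nonneg hx0 (by linarith : (0:ℝ) ≤ x - 2)]
  have hE : 4*x*((x*s-a)*((x*s-a)-1)*(2*(x*s-a)-1) + 3*(x*s-a)*((x*t-b)*((x*t-b)-1)-(x*s-a)*((x*s-a)-1)) + 6*(x*s-a)*(x*t-b)*(x-(x*t-b)) + (3*(x*t-b)*(x*s-a)*((x*s-a)-1) + 6*(x*s-a)*(x*t-b)*(x-(x*s-a)-(x*t-b)) + 3*(x*s-a)*(x*t-b)*((x*t-b)-1))) - 3*(4*s*(4*t - 2*t^2 - s*t - s^2/3))*(x^2-x)^2 =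
      (-48 : ℝ)*t*a*x^3 + (24 : ℝ)*t^2*a*x^3 + (-48 : ℝ)*s*b*x^3 + (60 : ℝ)*s*t*x^3 + (48 : ℝ)*s*t*b*x^3 + (24 : ℝ)*s*t*a*x^3 + (-48 : ℝ)*s*t^2*x^3 + (12 : ℝ)*s^2*b*x^3 + (12 : ℝ)*s^2*a*x^3 + (-24 : ℝ)*s^2*t*x^3 + (-8 : ℝ)*s^3*x^3 + (48 : ℝ)*a*b*x^2 + (36 : ℝ)*t*a*x^2 + (-48 : ℝ)*t*a*b*x^2 + (-12 : ℝ)*t*a^2*x^2 + (4 : ℝ)*s*x^2 + (36 : ℝ)*s*b*x^2 + (-24 : ℝ)*s*b^2*x^2 + (-24 : ℝ)*s*a*b*x^2 + (-12 : ℝ)*s*a^2*x^2 + (-48 : ℝ)*s*t*x^2 + (24 : ℝ)*s*t^2*x^2 + (12 : ℝ)*s^2*t*x^2 + (4 : ℝ)*s^3*x^2 + (-4 : ℝ)*a*x + (-36 : ℝ)*a*b*x + (24 : ℝ)*a*b^2*x + (12 : ℝ)*a^2*b*x + (4 : ℝ)*a^3*x := by ring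
  rw [hE, abs_le]
  have hm1 : t*a ≤ 1 := (mul_le_one₀ ht1 ha0 ha1)
  have hZ1 : (0:ℝ) ≤ t*a := by positivity
  have hm2 : t^2*a ≤ 1 := (mul_le_one₀ (pow_le_one₀ ht0 ht1) ha0 ha1)
  have hZ2 : (0:ℝ) ≤ t^2*a := by positivity
  have hm3 : s*b ≤ 1 := (mul_le_one₀ hs1 hb0 hb1)
  have hZ3 : (0:ℝ) ≤ s*b := by positivity
  have hm4 : s*t ≤ 1 := (mul_le_one₀ hs1 ht0 ht1)
  have hZ4 : (0:ℝ) ≤ s*t := by positivity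
  have hm5 : s*t*b ≤ 1 := (mul_le_one₀ (mul_le_one₀ hs1 ht0 ht1) hb0 hb1)
  have hZ5 : (0:ℝ) ≤ s*t*b := by positivity
  have hm6 : s*t*a ≤ 1 := (mul_le_one₀ (mul_le_one₀ hs1 ht0 ht1) ha0 ha1)
  have hZ6 : (0:ℝ) ≤ s*t*a := by positivity
  have hm7 : s*t^2 ≤ 1 := (mul_le_one₀ hs1 (by positivity) (pow_le_one₀ ht0 ht1))
  have hZ7 : (0:ℝ) ≤ s*t^2 := by positivity
  have hm8 : s^2*b ≤ 1 := (mul_le_one₀ (pow_le_one₀ hs0 hs1) hb0 hb1)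
  have hZ8 : (0:ℝ) ≤ s^2*b := by positivity
  have hm9 : s^2*a ≤ 1 := (mul_le_one₀ (pow_le_one₀ hs0 hs1) ha0 ha1)
  have hZ9 : (0:ℝ) ≤ s^2*a := by positivity
  have hm10 : s^2*t ≤ 1 := (mul_le_one₀ (pow_le_one₀ hs0 hs1) ht0 ht1)
  have hZ10 : (0:ℝ) ≤ s^2*t := by positivity
  have hm11 : s^3 ≤ 1 := (pow_le_one₀ hs0 hs1)
  have hZ11 : (0:ℝ) ≤ s^3 := by positivity
  have hm12 : a*b ≤ 1 := (mul_le_one₀ ha1 hb0 hb1)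
  have hZ12 : (0:ℝ) ≤ a*b := by positivity
  have hm13 : t*a*b ≤ 1 := (mul_le_one₀ (mul_le_one₀ ht1 ha0 ha1) hb0 hb1)
  have hZ13 : (0:ℝ) ≤ t*a*b := by positivity
  have hm14 : t*a^2 ≤ 1 := (mul_le_one₀ ht1 (by positivity) (pow_le_one₀ ha0 ha1))
  have hZ14 : (0:ℝ) ≤ t*a^2 := by positivity
  have hm15 : s ≤ 1 := hs1
  have hZ15 : (0:ℝ) ≤ s := by positivity
  have hm16 : s*b^2 ≤ 1 := (mul_le_one₀ hs1 (by positivity) (pow_le_one₀ hb0 hb1))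
  have hZ16 : (0:ℝ) ≤ s*b^2 := by positivity
  have hm17 : s*a*b ≤ 1 := (mul_le_one₀ (mul_le_one₀ hs1 ha0 ha1) hb0 hb1)
  have hZ17 : (0:ℝ) ≤ s*a*b := by positivity
  have hm18 : s*a^2 ≤ 1 := (mul_le_one₀ hs1 (by positivity) (pow_le_one₀ ha0 ha1))
  have hZ18 : (0:ℝ) ≤ s*a^2 := by positivity
  have hm19 : a ≤ 1 := ha1
  have hZ19 : (0:ℝ) ≤ a := by positivity
  have hm20 : a*b^2 ≤ 1 := (mul_le_one₀ ha1 (by positivity) (pow_le_one₀ hb0 hb1))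
  have hZ20 : (0:ℝ) ≤ a*b^2 := by positivity
  have hm21 : a^2*b ≤ 1 := (mul_le_one₀ (pow_le_one₀ ha0 ha1) hb0 hb1)
  have hZ21 : (0:ℝ) ≤ a^2*b := by positivity
  have hm22 : a^3 ≤ 1 := (pow_le_one₀ ha0 ha1)
  have hZ22 : (0:ℝ) ≤ a^3 := by positivity
  have hF1 : a*x ≤ x^3 := by linarith [mul_le_mul hm19 hp1 (by positivity : (0:ℝ) ≤ x) zero_le_one]
  have hW1 : (0:ℝ) ≤ a*x := by positivity
  have hF2 : a*b*x ≤ x^3 := by linarith [mul_le_mul hm12 hp1 (by positivity : (0:ℝ) ≤ x) zero_le_one]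
  have hW2 : (0:ℝ) ≤ a*b*x := by positivity
  have hF3 : a*b*x^2 ≤ x^3 := by linarith [mul_le_mul hm12 hp2 (by positivity : (0:ℝ) ≤ x^2) zero_le_one]
  have hW3 : (0:ℝ) ≤ a*b*x^2 := by positivity
  have hF4 : a*b^2*x ≤ x^3 := by linarith [mul_le_mul hm20 hp1 (by positivity : (0:ℝ) ≤ x) zero_le_one]
  have hW4 : (0:ℝ) ≤ a*b^2*x := by positivity
  have hF5 : a^2*b*x ≤ x^3 := by linarith [mul_le_mul hm21 hp1 (by positivity : (0:ℝ) ≤ x) zero_le_one]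
  have hW5 : (0:ℝ) ≤ a^2*b*x := by positivity
  have hF6 : a^3*x ≤ x^3 := by linarith [mul_le_mul hm22 hp1 (by positivity : (0:ℝ) ≤ x) zero_le_one]
  have hW6 : (0:ℝ) ≤ a^3*x := by positivity
  have hF7 : s*x^2 ≤ x^3 := by linarith [mul_le_mul hm15 hp2 (by positivity : (0:ℝ) ≤ x^2) zero_le_one]
  have hW7 : (0:ℝ) ≤ s*x^2 := by positivity
  have hF8 : s*a*b*x^2 ≤ x^3 := by linarith [mul_le_mul hm17 hp2 (by positivity : (0:ℝ) ≤ x^2) zero_le_one]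
  have hW8 : (0:ℝ) ≤ s*a*b*x^2 := by positivity
  have hF9 : s*a^2*x^2 ≤ x^3 := by linarith [mul_le_mul hm18 hp2 (by positivity : (0:ℝ) ≤ x^2) zero_le_one]
  have hW9 : (0:ℝ) ≤ s*a^2*x^2 := by positivity
  have hF10 : s*b*x^2 ≤ x^3 := by linarith [mul_le_mul hm3 hp2 (by positivity : (0:ℝ) ≤ x^2) zero_le_one]
  have hW10 : (0:ℝ) ≤ s*b*x^2 := by positivity
  have hF11 : s*b*x^3 ≤ x^3 := by linarith [mul_le_mul hm3 (le_refl (x^3)) (by positivity : (0:ℝ) ≤ x^3) zero_le_one]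
  have hW11 : (0:ℝ) ≤ s*b*x^3 := by positivity
  have hF12 : s*b^2*x^2 ≤ x^3 := by linarith [mul_le_mul hm16 hp2 (by positivity : (0:ℝ) ≤ x^2) zero_le_one]
  have hW12 : (0:ℝ) ≤ s*b^2*x^2 := by positivity
  have hF13 : s*t*x^2 ≤ x^3 := by linarith [mul_le_mul hm4 hp2 (by positivity : (0:ℝ) ≤ x^2) zero_le_one]
  have hW13 : (0:ℝ) ≤ s*t*x^2 := by positivity
  have hF14 : s*t*x^3 ≤ x^3 := by linarith [mul_le_mul hm4 (le_refl (x^3)) (by positivity : (0:ℝ) ≤ x^3) zero_le_one]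
  have hW14 : (0:ℝ) ≤ s*t*x^3 := by positivity
  have hF15 : s*t*a*x^3 ≤ x^3 := by linarith [mul_le_mul hm6 (le_refl (x^3)) (by positivity : (0:ℝ) ≤ x^3) zero_le_one]
  have hW15 : (0:ℝ) ≤ s*t*a*x^3 := by positivity
  have hF16 : s*t*b*x^3 ≤ x^3 := by linarith [mul_le_mul hm5 (le_refl (x^3)) (by positivity : (0:ℝ) ≤ x^3) zero_le_one]
  have hW16 : (0:ℝ) ≤ s*t*b*x^3 := by positivity
  have hF17 : s*t^2*x^2 ≤ x^3 := by linarith [mul_le_mul hm7 hp2 (by positivity : (0:ℝ) ≤ x^2) zero_le_one]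
  have hW17 : (0:ℝ) ≤ s*t^2*x^2 := by positivity
  have hF18 : s*t^2*x^3 ≤ x^3 := by linarith [mul_le_mul hm7 (le_refl (x^3)) (by positivity : (0:ℝ) ≤ x^3) zero_le_one]
  have hW18 : (0:ℝ) ≤ s*t^2*x^3 := by positivity
  have hF19 : s^2*a*x^3 ≤ x^3 := by linarith [mul_le_mul hm9 (le_refl (x^3)) (by positivity : (0:ℝ) ≤ x^3) zero_le_one]
  have hW19 : (0:ℝ) ≤ s^2*a*x^3 := by positivity
  have hF20 : s^2*b*x^3 ≤ x^3 := by linarith [mul_le_mul hm8 (le_refl (x^3)) (by positivity : (0:ℝ) ≤ x^3) zero_le_one]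
  have hW20 : (0:ℝ) ≤ s^2*b*x^3 := by positivity
  have hF21 : s^2*t*x^2 ≤ x^3 := by linarith [mul_le_mul hm10 hp2 (by positivity : (0:ℝ) ≤ x^2) zero_le_one]
  have hW21 : (0:ℝ) ≤ s^2*t*x^2 := by positivity
  have hF22 : s^2*t*x^3 ≤ x^3 := by linarith [mul_le_mul hm10 (le_refl (x^3)) (by positivity : (0:ℝ) ≤ x^3) zero_le_one]
  have hW22 : (0:ℝ) ≤ s^2*t*x^3 := by positivity
  have hF23 : s^3*x^2 ≤ x^3 := by linarith [mul_le_mul hm11 hp2 (by positivity : (0:ℝ) ≤ x^2) zero_le_one]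
  have hW23 : (0:ℝ) ≤ s^3*x^2 := by positivity
  have hF24 : s^3*x^3 ≤ x^3 := by linarith [mul_le_mul hm11 (le_refl (x^3)) (by positivity : (0:ℝ) ≤ x^3) zero_le_one]
  have hW24 : (0:ℝ) ≤ s^3*x^3 := by positivity
  have hF25 : t*a*x^2 ≤ x^3 := by linarith [mul_le_mul hm1 hp2 (by positivity : (0:ℝ) ≤ x^2) zero_le_one]
  have hW25 : (0:ℝ) ≤ t*a*x^2 := by positivity
  have hF26 : t*a*x^3 ≤ x^3 := by linarith [mul_le_mul hm1 (le_refl (x^3)) (by positivity : (0:ℝ) ≤ x^3) zero_le_one]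
  have hW26 : (0:ℝ) ≤ t*a*x^3 := by positivity
  have hF27 : t*a*b*x^2 ≤ x^3 := by linarith [mul_le_mul hm13 hp2 (by positivity : (0:ℝ) ≤ x^2) zero_le_one]
  have hW27 : (0:ℝ) ≤ t*a*b*x^2 := by positivity
  have hF28 : t*a^2*x^2 ≤ x^3 := by linarith [mul_le_mul hm14 hp2 (by positivity : (0:ℝ) ≤ x^2) zero_le_one]
  have hW28 : (0:ℝ) ≤ t*a^2*x^2 := by positivity
  have hF29 : t^2*a*x^3 ≤ x^3 := by linarith [mul_le_mul hm2 (le_refl (x^3)) (by positivity : (0:ℝ) ≤ x^3) zero_le_one]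
  have hW29 : (0:ℝ) ≤ t^2*a*x^3 := by positivity
  constructor <;> linarith

lemma bound2 (x s t a b : ℝ) (hx : 2 ≤ x)
    (hs0 : 0 ≤ s) (hs1 : s ≤ 1) (ht0 : 0 ≤ t) (ht1 : t ≤ 1)
    (ha0 : 0 ≤ a) (ha1 : a ≤ 1) (hb0 : 0 ≤ b) (hb1 : b ≤ 1) :
    |4*x*((x*s-a)*((x*s-a)-1)*(2*(x*s-a)-1) + 3*(x*s-a)*((x*t-b)*((x*t-b)-1)-(x*s-a)*((x*s-a)-1)) + 6*(x*s-a)*(x*t-b)*(x-(x*t-b)) + (3*(x*t-b)*(x-(x*t-b))*(x-(x*t-b)-1) + (3*(x-1)*((x*s-a)*((x*s-a)-1)-(x-(x*t-b))*(x-(x*t-b)-1)) - ((x*s-a)*((x*s-a)-1)*(2*(x*s-a)-1) - (x-(x*t-b))*(x-(x*t-b)-1)*(2*(x-(x*t-b))-1))) + 3*(x*s-a)*(x-(x*s-a))*(x-(x*s-a)-1))) - 3*(4*(s*(1 - s + 2*t - t^2) - (1-t)^3/3))*(x^2-x)^2| ≤ 800*x^3 := by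
  have hx0 : (0:ℝ) ≤ x := by linarith
  have hx1 : (1:ℝ) ≤ x := by linarith
  have hp2 : x^2 ≤ x^3 := by nlinarith [mul_nonneg (mul_nonneg hx0 hx0) (by linarith : (0:ℝ) ≤ x - 1)]
  have hp1 : x ≤ x^3 := by nlinarith [mul_nonneg hx0 (by linarith : (0:ℝ) ≤ x - 2)]
  have hE : 4*x*((x*s-a)*((x*s-a)-1)*(2*(x*s-a)-1) + 3*(x*s-a)*((x*t-b)*((x*t-b)-1)-(x*s-a)*((x*s-a)-1)) + 6*(x*s-a)*(x*t-b)*(x-(x*t-b)) + (3*(x*t-b)*(x-(x*t-b))*(x-(x*t-b)-1) + (3*(x-1)*((x*s-a)*((x*s-a)-1)-(x-(x*t-b))*(x-(x*t-b)-1)) - ((x*s-a)*((x*s-a)-1)*(2*(x*s-a)-1) - (x-(x*t-b))*(x-(x*t-b)-1)*(2*(x-(x*t-b))-1))) + 3*(x*s-a)*(x-(x*s-a))*(x-(x*s-a)-1))) - 3*(4*(s*(1 - s + 2*t - t^2) - (1-t)^3/3))*(x^2-x)^2 =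
      (4 : ℝ)*x^3 + (-12 : ℝ)*b*x^3 + (-12 : ℝ)*a*x^3 + (24 : ℝ)*t*b*x^3 + (-24 : ℝ)*t*a*x^3 + (-12 : ℝ)*t^2*x^3 + (-12 : ℝ)*t^2*b*x^3 + (12 : ℝ)*t^2*a*x^3 + (8 : ℝ)*t^3*x^3 + (-24 : ℝ)*s*b*x^3 + (24 : ℝ)*s*a*x^3 + (36 : ℝ)*s*t*x^3 + (24 : ℝ)*s*t*b*x^3 + (-24 : ℝ)*s*t^2*x^3 + (-12 : ℝ)*s^2*x^3 + (-4 : ℝ)*x^2 + (24 : ℝ)*b*x^2 + (-12 : ℝ)*b^2*x^2 + (24 : ℝ)*a*x^2 + (24 : ℝ)*a*b*x^2 + (-12 : ℝ)*a^2*x^2 + (-4 : ℝ)*t*x^2 + (-24 : ℝ)*t*b*x^2 + (12 : ℝ)*t*b^2*x^2 + (12 : ℝ)*t*a*x^2 + (-24 : ℝ)*t*a*b*x^2 + (12 : ℝ)*t^2*x^2 + (-4 : ℝ)*t^3*x^2 + (12 : ℝ)*s*b*x^2 + (-12 : ℝ)*s*b^2*x^2 + (-24 : ℝ)*s*a*x^2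 + (-24 : ℝ)*s*t*x^2 + (12 : ℝ)*s*t^2*x^2 + (12 : ℝ)*s^2*x^2 + (-8 : ℝ)*b*x + (12 : ℝ)*b^2*x + (-4 : ℝ)*b^3*x + (-12 : ℝ)*a*x + (-12 : ℝ)*a*b*x + (12 : ℝ)*a*b^2*x + (12 : ℝ)*a^2*x := by ring
  rw [hE, abs_le]
  have hm1 : b ≤ 1 := hb1
  have hZ1 : (0:ℝ) ≤ b := by positivity
  have hm2 : a ≤ 1 := ha1
  have hZ2 : (0:ℝ) ≤ a := by positivity
  have hm3 : t*b ≤ 1 := (mul_le_one₀ ht1 hb0 hb1)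
  have hZ3 : (0:ℝ) ≤ t*b := by positivity
  have hm4 : t*a ≤ 1 := (mul_le_one₀ ht1 ha0 ha1)
  have hZ4 : (0:ℝ) ≤ t*a := by positivity
  have hm5 : t^2 ≤ 1 := (pow_le_one₀ ht0 ht1)
  have hZ5 : (0:ℝ) ≤ t^2 := by positivity
  have hm6 : t^2*b ≤ 1 := (mul_le_one₀ (pow_le_one₀ ht0 ht1) hb0 hb1)
  have hZ6 : (0:ℝ) ≤ t^2*b := by positivity
  have hm7 : t^2*a ≤ 1 := (mul_le_one₀ (pow_le_one₀ ht0 ht1) ha0 ha1)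
  have hZ7 : (0:ℝ) ≤ t^2*a := by positivity
  have hm8 : t^3 ≤ 1 := (pow_le_one₀ ht0 ht1)
  have hZ8 : (0:ℝ) ≤ t^3 := by positivity
  have hm9 : s*b ≤ 1 := (mul_le_one₀ hs1 hb0 hb1)
  have hZ9 : (0:ℝ) ≤ s*b := by positivity
  have hm10 : s*a ≤ 1 := (mul_le_one₀ hs1 ha0 ha1)
  have hZ10 : (0:ℝ) ≤ s*a := by positivity
  have hm11 : s*t ≤ 1 := (mul_le_one₀ hs1 ht0 ht1)
  have hZ11 : (0:ℝ) ≤ s*t := by positivity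
  have hm12 : s*t*b ≤ 1 := (mul_le_one₀ (mul_le_one₀ hs1 ht0 ht1) hb0 hb1)
  have hZ12 : (0:ℝ) ≤ s*t*b := by positivity
  have hm13 : s*t^2 ≤ 1 := (mul_le_one₀ hs1 (by positivity) (pow_le_one₀ ht0 ht1))
  have hZ13 : (0:ℝ) ≤ s*t^2 := by positivity
  have hm14 : s^2 ≤ 1 := (pow_le_one₀ hs0 hs1)
  have hZ14 : (0:ℝ) ≤ s^2 := by positivity
  have hm15 : b^2 ≤ 1 := (pow_le_one₀ hb0 hb1)
  have hZ15 : (0:ℝ) ≤ b^2 := by positivity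
  have hm16 : a*b ≤ 1 := (mul_le_one₀ ha1 hb0 hb1)
  have hZ16 : (0:ℝ) ≤ a*b := by positivity
  have hm17 : a^2 ≤ 1 := (pow_le_one₀ ha0 ha1)
  have hZ17 : (0:ℝ) ≤ a^2 := by positivity
  have hm18 : t ≤ 1 := ht1
  have hZ18 : (0:ℝ) ≤ t := by positivity
  have hm19 : t*b^2 ≤ 1 := (mul_le_one₀ ht1 (by positivity) (pow_le_one₀ hb0 hb1))
  have hZ19 : (0:ℝ) ≤ t*b^2 := by positivity
  have hm20 : t*a*b ≤ 1 := (mul_le_one₀ (mul_le_one₀ ht1 ha0 ha1) hb0 hb1)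
  have hZ20 : (0:ℝ) ≤ t*a*b := by positivity
  have hm21 : s*b^2 ≤ 1 := (mul_le_one₀ hs1 (by positivity) (pow_le_one₀ hb0 hb1))
  have hZ21 : (0:ℝ) ≤ s*b^2 := by positivity
  have hm22 : b^3 ≤ 1 := (pow_le_one₀ hb0 hb1)
  have hZ22 : (0:ℝ) ≤ b^3 := by positivity
  have hm23 : a*b^2 ≤ 1 := (mul_le_one₀ ha1 (by positivity) (pow_le_one₀ hb0 hb1))
  have hZ23 : (0:ℝ) ≤ a*b^2 := by positivity
  have hF1 : x^2 ≤ x^3 := hp2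
  have hW1 : (0:ℝ) ≤ x^2 := by positivity
  have hF2 : x^3 ≤ x^3 := le_refl _
  have hW2 : (0:ℝ) ≤ x^3 := by positivity
  have hF3 : a*x ≤ x^3 := by linarith [mul_le_mul hm2 hp1 (by positivity : (0:ℝ) ≤ x) zero_le_one]
  have hW3 : (0:ℝ) ≤ a*x := by positivity
  have hF4 : a*x^2 ≤ x^3 := by linarith [mul_le_mul hm2 hp2 (by positivity : (0:ℝ) ≤ x^2) zero_le_one]
  have hW4 : (0:ℝ) ≤ a*x^2 := by positivity
  have hF5 : a*x^3 ≤ x^3 := by linarith [mul_le_mul hm2 (le_refl (x^3)) (by positivity : (0:ℝ) ≤ x^3) zero_le_one]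
  have hW5 : (0:ℝ) ≤ a*x^3 := by positivity
  have hF6 : a*b*x ≤ x^3 := by linarith [mul_le_mul hm16 hp1 (by positivity : (0:ℝ) ≤ x) zero_le_one]
  have hW6 : (0:ℝ) ≤ a*b*x := by positivity
  have hF7 : a*b*x^2 ≤ x^3 := by linarith [mul_le_mul hm16 hp2 (by positivity : (0:ℝ) ≤ x^2) zero_le_one]
  have hW7 : (0:ℝ) ≤ a*b*x^2 := by positivity
  have hF8 : a*b^2*x ≤ x^3 := by linarith [mul_le_mul hm23 hp1 (by positivity : (0:ℝ) ≤ x) zero_le_one]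
  have hW8 : (0:ℝ) ≤ a*b^2*x := by positivity
  have hF9 : a^2*x ≤ x^3 := by linarith [mul_le_mul hm17 hp1 (by positivity : (0:ℝ) ≤ x) zero_le_one]
  have hW9 : (0:ℝ) ≤ a^2*x := by positivity
  have hF10 : a^2*x^2 ≤ x^3 := by linarith [mul_le_mul hm17 hp2 (by positivity : (0:ℝ) ≤ x^2) zero_le_one]
  have hW10 : (0:ℝ) ≤ a^2*x^2 := by positivity
  have hF11 : b*x ≤ x^3 := by linarith [mul_le_mul hm1 hp1 (by positivity : (0:ℝ) ≤ x) zero_le_one]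
  have hW11 : (0:ℝ) ≤ b*x := by positivity
  have hF12 : b*x^2 ≤ x^3 := by linarith [mul_le_mul hm1 hp2 (by positivity : (0:ℝ) ≤ x^2) zero_le_one]
  have hW12 : (0:ℝ) ≤ b*x^2 := by positivity
  have hF13 : b*x^3 ≤ x^3 := by linarith [mul_le_mul hm1 (le_refl (x^3)) (by positivity : (0:ℝ) ≤ x^3) zero_le_one]
  have hW13 : (0:ℝ) ≤ b*x^3 := by positivity
  have hF14 : b^2*x ≤ x^3 := by linarith [mul_le_mul hm15 hp1 (by positivity : (0:ℝ) ≤ x) zero_le_one]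
  have hW14 : (0:ℝ) ≤ b^2*x := by positivity
  have hF15 : b^2*x^2 ≤ x^3 := by linarith [mul_le_mul hm15 hp2 (by positivity : (0:ℝ) ≤ x^2) zero_le_one]
  have hW15 : (0:ℝ) ≤ b^2*x^2 := by positivity
  have hF16 : b^3*x ≤ x^3 := by linarith [mul_le_mul hm22 hp1 (by positivity : (0:ℝ) ≤ x) zero_le_one]
  have hW16 : (0:ℝ) ≤ b^3*x := by positivity
  have hF17 : s*a*x^2 ≤ x^3 := by linarith [mul_le_mul hm10 hp2 (by positivity : (0:ℝ) ≤ x^2) zero_le_one]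
  have hW17 : (0:ℝ) ≤ s*a*x^2 := by positivity
  have hF18 : s*a*x^3 ≤ x^3 := by linarith [mul_le_mul hm10 (le_refl (x^3)) (by positivity : (0:ℝ) ≤ x^3) zero_le_one]
  have hW18 : (0:ℝ) ≤ s*a*x^3 := by positivity
  have hF19 : s*b*x^2 ≤ x^3 := by linarith [mul_le_mul hm9 hp2 (by positivity : (0:ℝ) ≤ x^2) zero_le_one]
  have hW19 : (0:ℝ) ≤ s*b*x^2 := by positivity
  have hF20 : s*b*x^3 ≤ x^3 := by linarith [mul_le_mul hm9 (le_refl (x^3)) (by positivity : (0:ℝ) ≤ x^3) zero_le_one]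
  have hW20 : (0:ℝ) ≤ s*b*x^3 := by positivity
  have hF21 : s*b^2*x^2 ≤ x^3 := by linarith [mul_le_mul hm21 hp2 (by positivity : (0:ℝ) ≤ x^2) zero_le_one]
  have hW21 : (0:ℝ) ≤ s*b^2*x^2 := by positivity
  have hF22 : s*t*x^2 ≤ x^3 := by linarith [mul_le_mul hm11 hp2 (by positivity : (0:ℝ) ≤ x^2) zero_le_one]
  have hW22 : (0:ℝ) ≤ s*t*x^2 := by positivity
  have hF23 : s*t*x^3 ≤ x^3 := by linarith [mul_le_mul hm11 (le_refl (x^3)) (by positivity : (0:ℝ) ≤ x^3) zero_le_one]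
  have hW23 : (0:ℝ) ≤ s*t*x^3 := by positivity
  have hF24 : s*t*b*x^3 ≤ x^3 := by linarith [mul_le_mul hm12 (le_refl (x^3)) (by positivity : (0:ℝ) ≤ x^3) zero_le_one]
  have hW24 : (0:ℝ) ≤ s*t*b*x^3 := by positivity
  have hF25 : s*t^2*x^2 ≤ x^3 := by linarith [mul_le_mul hm13 hp2 (by positivity : (0:ℝ) ≤ x^2) zero_le_one]
  have hW25 : (0:ℝ) ≤ s*t^2*x^2 := by positivity
  have hF26 : s*t^2*x^3 ≤ x^3 := by linarith [mul_le_mul hm13 (le_refl (x^3)) (by positivity : (0:ℝ) ≤ x^3) zero_le_one]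
  have hW26 : (0:ℝ) ≤ s*t^2*x^3 := by positivity
  have hF27 : s^2*x^2 ≤ x^3 := by linarith [mul_le_mul hm14 hp2 (by positivity : (0:ℝ) ≤ x^2) zero_le_one]
  have hW27 : (0:ℝ) ≤ s^2*x^2 := by positivity
  have hF28 : s^2*x^3 ≤ x^3 := by linarith [mul_le_mul hm14 (le_refl (x^3)) (by positivity : (0:ℝ) ≤ x^3) zero_le_one]
  have hW28 : (0:ℝ) ≤ s^2*x^3 := by positivity
  have hF29 : t*x^2 ≤ x^3 := by linarith [mul_le_mul hm18 hp2 (by positivity : (0:ℝ) ≤ x^2) zero_le_one]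
  have hW29 : (0:ℝ) ≤ t*x^2 := by positivity
  have hF30 : t*a*x^2 ≤ x^3 := by linarith [mul_le_mul hm4 hp2 (by positivity : (0:ℝ) ≤ x^2) zero_le_one]
  have hW30 : (0:ℝ) ≤ t*a*x^2 := by positivity
  have hF31 : t*a*x^3 ≤ x^3 := by linarith [mul_le_mul hm4 (le_refl (x^3)) (by positivity : (0:ℝ) ≤ x^3) zero_le_one]
  have hW31 : (0:ℝ) ≤ t*a*x^3 := by positivity
  have hF32 : t*a*b*x^2 ≤ x^3 := by linarith [mul_le_mul hm20 hp2 (by positivity : (0:ℝ) ≤ x^2) zero_le_one]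
  have hW32 : (0:ℝ) ≤ t*a*b*x^2 := by positivity
  have hF33 : t*b*x^2 ≤ x^3 := by linarith [mul_le_mul hm3 hp2 (by positivity : (0:ℝ) ≤ x^2) zero_le_one]
  have hW33 : (0:ℝ) ≤ t*b*x^2 := by positivity
  have hF34 : t*b*x^3 ≤ x^3 := by linarith [mul_le_mul hm3 (le_refl (x^3)) (by positivity : (0:ℝ) ≤ x^3) zero_le_one]
  have hW34 : (0:ℝ) ≤ t*b*x^3 := by positivity
  have hF35 : t*b^2*x^2 ≤ x^3 := by linarith [mul_le_mul hm19 hp2 (by positivity : (0:ℝ) ≤ x^2) zero_le_one]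
  have hW35 : (0:ℝ) ≤ t*b^2*x^2 := by positivity
  have hF36 : t^2*x^2 ≤ x^3 := by linarith [mul_le_mul hm5 hp2 (by positivity : (0:ℝ) ≤ x^2) zero_le_one]
  have hW36 : (0:ℝ) ≤ t^2*x^2 := by positivity
  have hF37 : t^2*x^3 ≤ x^3 := by linarith [mul_le_mul hm5 (le_refl (x^3)) (by positivity : (0:ℝ) ≤ x^3) zero_le_one]
  have hW37 : (0:ℝ) ≤ t^2*x^3 := by positivity
  have hF38 : t^2*a*x^3 ≤ x^3 := by linarith [mul_le_mul hm7 (le_refl (x^3)) (by positivity : (0:ℝ) ≤ x^3) zero_le_one]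
  have hW38 : (0:ℝ) ≤ t^2*a*x^3 := by positivity
  have hF39 : t^2*b*x^3 ≤ x^3 := by linarith [mul_le_mul hm6 (le_refl (x^3)) (by positivity : (0:ℝ) ≤ x^3) zero_le_one]
  have hW39 : (0:ℝ) ≤ t^2*b*x^3 := by positivity
  have hF40 : t^3*x^2 ≤ x^3 := by linarith [mul_le_mul hm8 hp2 (by positivity : (0:ℝ) ≤ x^2) zero_le_one]
  have hW40 : (0:ℝ) ≤ t^3*x^2 := by positivity
  have hF41 : t^3*x^3 ≤ x^3 := by linarith [mul_le_mul hm8 (le_refl (x^3)) (by positivity : (0:ℝ) ≤ x^3) zero_le_one]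
  have hW41 : (0:ℝ) ≤ t^3*x^3 := by positivity
  constructor <;> linarith

lemma u_facts (n : ℕ) (hn : 2 ≤ n) (r : ℝ) (h0 : 0 ≤ r) (h1 : r ≤ 1) :
    |u n r - r*(2-r)| ≤ 8*(n:ℝ)⁻¹ ∧ 0 ≤ u n r ∧ u n r ≤ 1 := by
  have hn2 : (2:ℝ) ≤ (n:ℝ) := by exact_mod_cast hn
  have hnR : (0:ℝ) < n := by linarith
  have hD : (0:ℝ) < (n:ℝ)^2 - (n:ℝ) := by nlinarith
  have hk0 : (0:ℤ) ≤ ⌊(n:ℝ)*r⌋ := Int.floor_nonneg.2 (by positivity)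
  have hkn : ⌊(n:ℝ)*r⌋ ≤ (n:ℤ) := by
    have h : (n:ℝ)*r ≤ ((n:ℤ):ℝ) := by push_cast; nlinarith
    calc ⌊(n:ℝ)*r⌋ ≤ ⌊((n:ℤ):ℝ)⌋ := Int.floor_mono h
      _ = (n:ℤ) := Int.floor_intCast _
  have hK2 : ((⌊(n:ℝ)*r⌋:ℤ):ℝ) ≤ (n:ℝ)*r := Int.floor_le _
  have hK1 : (n:ℝ)*r - 1 ≤ ((⌊(n:ℝ)*r⌋:ℤ):ℝ) := by
    have := Int.lt_floor_add_one ((n:ℝ)*r); linarith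
  have hK0 : (0:ℝ) ≤ ((⌊(n:ℝ)*r⌋:ℤ):ℝ) := by exact_mod_cast hk0
  have hKn : ((⌊(n:ℝ)*r⌋:ℤ):ℝ) ≤ (n:ℝ) := by exact_mod_cast hkn
  have hu : u n r = (((⌊(n:ℝ)*r⌋:ℤ):ℝ)*(2*(n:ℝ)-((⌊(n:ℝ)*r⌋:ℤ):ℝ)-1))/((n:ℝ)^2-(n:ℝ)) := by
    unfold u; push_cast; ring
  refine ⟨?_, ?_, ?_⟩
  · have key : |((⌊(n:ℝ)*r⌋:ℤ):ℝ)*(2*(n:ℝ)-((⌊(n:ℝ)*r⌋:ℤ):ℝ)-1) - r*(2-r)*((n:ℝ)^2-(n:ℝ))|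
        ≤ 4*(n:ℝ) := by
      set K := ((⌊(n:ℝ)*r⌋:ℤ):ℝ)
      rw [abs_le]
      constructor
      · nlinarith [mul_nonneg (mul_nonneg hnR.le (by linarith : (0:ℝ) ≤ (n:ℝ)*r - K)) h0,
          mul_nonneg (mul_nonneg hnR.le (by linarith : (0:ℝ) ≤ (n:ℝ)*r - K)) (by linarith : (0:ℝ) ≤ 1 - r),
          mul_nonneg hnR.le (by linarith : (0:ℝ) ≤ 1 - r),
          mul_nonneg (mul_nonneg hnR.le h0) (by linarith : (0:ℝ) ≤ 1 - r),
          sq_nonneg (1 + 2*(K - (n:ℝ)*r)),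
          mul_nonneg (by linarith : (0:ℝ) ≤ K - ((n:ℝ)*r - 1)) (by linarith : (0:ℝ) ≤ (n:ℝ)*r - K)]
      · nlinarith [mul_nonneg (mul_nonneg hnR.le (by linarith : (0:ℝ) ≤ (n:ℝ)*r - K)) h0,
          mul_nonneg (mul_nonneg hnR.le (by linarith : (0:ℝ) ≤ 1 + (K - (n:ℝ)*r))) (by linarith : (0:ℝ) ≤ 1 - r),
          mul_nonneg hnR.le (sq_nonneg (1-2*r)),
          mul_nonneg (by linarith : (0:ℝ) ≤ K - ((n:ℝ)*r - 1)) (by linarith : (0:ℝ) ≤ (n:ℝ)*r - K),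
          mul_nonneg (mul_nonneg hnR.le h0) (by linarith : (0:ℝ) ≤ 1 - r)]
    have hquot : u n r - r*(2-r)
        = (((⌊(n:ℝ)*r⌋:ℤ):ℝ)*(2*(n:ℝ)-((⌊(n:ℝ)*r⌋:ℤ):ℝ)-1) - r*(2-r)*((n:ℝ)^2-(n:ℝ)))
            /((n:ℝ)^2-(n:ℝ)) := by
      rw [hu, sub_div, mul_div_assoc (r*(2-r)) ((n:ℝ)^2-(n:ℝ)) ((n:ℝ)^2-(n:ℝ)), div_self hD.ne', mul_one]
    rw [hquot, abs_div, abs_of_pos hD, div_le_iff₀ hD]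
    refine le_trans key ?_
    have hexp : 8*(n:ℝ)⁻¹*((n:ℝ)^2-(n:ℝ)) = 8*(n:ℝ) - 8 := by field_simp
    rw [hexp]; linarith
  · rw [hu]
    apply div_nonneg _ hD.le
    apply mul_nonneg hK0
    linarith
  · rw [hu, div_le_one hD]
    have hint : ⌊(n:ℝ)*r⌋*(2*(n:ℤ)-⌊(n:ℝ)*r⌋-1) ≤ (n:ℤ)^2 - (n:ℤ) := by
      rcases eq_or_lt_of_le hkn with he | hlt
      · rw [he]; nlinarith [sq_nonneg (n:ℤ)]
      · have h1 : (0:ℤ) ≤ ((n:ℤ)-⌊(n:ℝ)*r⌋)*((n:ℤ)-⌊(n:ℝ)*r⌋-1) :=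
          mul_nonneg (by omega) (by omega)
        nlinarith [h1]
    have : (((⌊(n:ℝ)*r⌋*(2*(n:ℤ)-⌊(n:ℝ)*r⌋-1)):ℤ):ℝ) ≤ (((n:ℤ)^2 - (n:ℤ) : ℤ):ℝ) := by
      exact_mod_cast hint
    push_cast at this
    nlinarith [this]

lemma sum_nu_eq (n : ℕ) (hn : 2 ≤ n) (r : ℝ) (h0 : 0 ≤ r) (h1 : r ≤ 1) :
    ∑ i ∈ Finset.Icc 1 n, nu n i r = 2 * u n r := by
  have hn2 : (2:ℝ) ≤ (n:ℝ) := by exact_mod_cast hn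
  have hnR : (0:ℝ) < n := by linarith
  have hk0 : (0:ℤ) ≤ ⌊(n:ℝ)*r⌋ := Int.floor_nonneg.2 (by positivity)
  have hkn : ⌊(n:ℝ)*r⌋ ≤ (n:ℤ) := by
    have h : (n:ℝ)*r ≤ ((n:ℤ):ℝ) := by push_cast; nlinarith
    calc ⌊(n:ℝ)*r⌋ ≤ ⌊((n:ℤ):ℝ)⌋ := Int.floor_mono h
      _ = (n:ℤ) := Int.floor_intCast _
  have hkc : ((⌊(n:ℝ)*r⌋.toNat:ℕ):ℤ) = ⌊(n:ℝ)*r⌋ := Int.toNat_of_nonneg hk0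
  have hknN : ⌊(n:ℝ)*r⌋.toNat ≤ n := by omega
  have hS := sum_m ⌊(n:ℝ)*r⌋.toNat n hknN
  rw [hkc] at hS
  have e : ∀ i ∈ Finset.Icc 1 n, nu n i r
      = ((min ⌊(n:ℝ)*r⌋ ((i:ℤ)-1) + min ⌊(n:ℝ)*r⌋ ((n:ℤ)-(i:ℤ)) : ℤ):ℝ) * 2 / ((n:ℝ)^2-(n:ℝ)) :=
    fun i _ => by unfold nu; ring
  rw [Finset.sum_congr rfl e, ← Finset.sum_div, ← Finset.sum_mul, ← Int.cast_sum, hS]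
  unfold u
  push_cast
  ring

lemma sum_nuprod_eq (n : ℕ) (s t : ℝ) :
    ∑ i ∈ Finset.Icc 1 n, nu n i s * nu n i t
      = 4 * (((∑ i ∈ Finset.Icc 1 n,
          ((min ⌊(n:ℝ)*s⌋ ((i:ℤ)-1) + min ⌊(n:ℝ)*s⌋ ((n:ℤ)-(i:ℤ)))
            * (min ⌊(n:ℝ)*t⌋ ((i:ℤ)-1) + min ⌊(n:ℝ)*t⌋ ((n:ℤ)-(i:ℤ))))) : ℤ):ℝ)
        / ((n:ℝ)^2-(n:ℝ))^2 := by
  rw [Int.cast_sum, Finset.mul_sum, Finset.sum_div]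
  refine Finset.sum_congr rfl fun i _ => ?_
  unfold nu
  rw [div_mul_div_comm, Int.cast_mul]
  ring

lemma Gam_comm (s t : ℝ) : Gam s t = Gam t s := by
  unfold Gam
  rcases lt_trichotomy s t with h | h | h
  · rw [if_pos h.le, if_neg (not_le.2 h)]
  · rw [h]
  · rw [if_neg (not_le.2 h), if_pos h.le]

lemma main_est (n : ℕ) (hn : 2 ≤ n) (s t : ℝ)
    (hs0 : 0 ≤ s) (hs1 : s ≤ 1) (ht0 : 0 ≤ t) (ht1 : t ≤ 1) (hst : s ≤ t) :
    |(n : ℝ) * (∑ i ∈ Finset.Icc 1 n,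
          (nu n i s - 2 * (n : ℝ)⁻¹ * u n s) * (nu n i t - 2 * (n : ℝ)⁻¹ * u n t)) -
        (Gam s t - 4 * (s * (2 - s)) * (t * (2 - t)))| ≤ 2000 * (n : ℝ)⁻¹ := by
  have hn2 : (2:ℝ) ≤ (n:ℝ) := by exact_mod_cast hn
  have hnR : (0:ℝ) < n := by linarith
  have hnne : (n:ℝ) ≠ 0 := ne_of_gt hnR
  have hD : (0:ℝ) < (n:ℝ)^2 - (n:ℝ) := by nlinarith
  have hDne : ((n:ℝ)^2 - (n:ℝ)) ≠ 0 := ne_of_gt hD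
  have hk0 : (0:ℤ) ≤ ⌊(n:ℝ)*s⌋ := Int.floor_nonneg.2 (by positivity)
  have hl0 : (0:ℤ) ≤ ⌊(n:ℝ)*t⌋ := Int.floor_nonneg.2 (by positivity)
  have hklz : ⌊(n:ℝ)*s⌋ ≤ ⌊(n:ℝ)*t⌋ := Int.floor_mono (by nlinarith)
  have hlzn : ⌊(n:ℝ)*t⌋ ≤ (n:ℤ) := by
    have h : (n:ℝ)*t ≤ ((n:ℤ):ℝ) := by push_cast; nlinarith
    calc ⌊(n:ℝ)*t⌋ ≤ ⌊((n:ℤ):ℝ)⌋ := Int.floor_mono h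
      _ = (n:ℤ) := Int.floor_intCast _
  have hK2 : ((⌊(n:ℝ)*s⌋:ℤ):ℝ) ≤ (n:ℝ)*s := Int.floor_le _
  have hK1 : (n:ℝ)*s - 1 ≤ ((⌊(n:ℝ)*s⌋:ℤ):ℝ) := by
    have := Int.lt_floor_add_one ((n:ℝ)*s); linarith
  have hL2 : ((⌊(n:ℝ)*t⌋:ℤ):ℝ) ≤ (n:ℝ)*t := Int.floor_le _
  have hL1 : (n:ℝ)*t - 1 ≤ ((⌊(n:ℝ)*t⌋:ℤ):ℝ) := by
    have := Int.lt_floor_add_one ((n:ℝ)*t); linarith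
  set k : ℕ := ⌊(n:ℝ)*s⌋.toNat with hkdef
  set l : ℕ := ⌊(n:ℝ)*t⌋.toNat with hldef
  have hkc : ((k:ℕ):ℤ) = ⌊(n:ℝ)*s⌋ := Int.toNat_of_nonneg hk0
  have hlc : ((l:ℕ):ℤ) = ⌊(n:ℝ)*t⌋ := Int.toNat_of_nonneg hl0
  have hklN : k ≤ l := by omega
  have hlnN : l ≤ n := by omega
  have hkR : ((k:ℕ):ℝ) = ((⌊(n:ℝ)*s⌋:ℤ):ℝ) := by exact_mod_cast hkc
  have hlR : ((l:ℕ):ℝ) = ((⌊(n:ℝ)*t⌋:ℤ):ℝ) := by exact_mod_cast hlc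
  have hK1' : (n:ℝ)*s - 1 ≤ ((k:ℕ):ℝ) := by rw [hkR]; exact hK1
  have hK2' : ((k:ℕ):ℝ) ≤ (n:ℝ)*s := by rw [hkR]; exact hK2
  have hL1' : (n:ℝ)*t - 1 ≤ ((l:ℕ):ℝ) := by rw [hlR]; exact hL1
  have hL2' : ((l:ℕ):ℝ) ≤ (n:ℝ)*t := by rw [hlR]; exact hL2
  have hsum_s := sum_nu_eq n hn s hs0 hs1
  have hsum_t := sum_nu_eq n hn t ht0 ht1
  have hprod := sum_nuprod_eq n s t
  set T : ℤ := ∑ i ∈ Finset.Icc 1 n,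
      ((min ⌊(n:ℝ)*s⌋ ((i:ℤ)-1) + min ⌊(n:ℝ)*s⌋ ((n:ℤ)-(i:ℤ)))
        * (min ⌊(n:ℝ)*t⌋ ((i:ℤ)-1) + min ⌊(n:ℝ)*t⌋ ((n:ℤ)-(i:ℤ)))) with hTdef
  have master : (n : ℝ) * (∑ i ∈ Finset.Icc 1 n,
        (nu n i s - 2 * (n : ℝ)⁻¹ * u n s) * (nu n i t - 2 * (n : ℝ)⁻¹ * u n t))
      = 4*(n:ℝ)*((T:ℤ):ℝ)/((n:ℝ)^2-(n:ℝ))^2 - 4*(u n s)*(u n t) := by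
    have e : ∀ i ∈ Finset.Icc 1 n,
        (nu n i s - 2*(n:ℝ)⁻¹*u n s)*(nu n i t - 2*(n:ℝ)⁻¹*u n t)
        = nu n i s * nu n i t - (2*(n:ℝ)⁻¹*u n t)*nu n i s - (2*(n:ℝ)⁻¹*u n s)*nu n i t
          + (2*(n:ℝ)⁻¹*u n s)*(2*(n:ℝ)⁻¹*u n t) := fun i _ => by ring
    rw [Finset.sum_congr rfl e, Finset.sum_add_distrib, Finset.sum_sub_distrib,
      Finset.sum_sub_distrib, ← Finset.mul_sum, ← Finset.mul_sum, Finset.sum_const,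
      Nat.card_Icc, hsum_s, hsum_t, hprod]
    simp only [nsmul_eq_mul, Nat.add_sub_cancel]
    field_simp
    ring
  rw [master]
  obtain ⟨hus, hus0, hus1⟩ := u_facts n hn s hs0 hs1
  obtain ⟨hut, hut0, hut1⟩ := u_facts n hn t ht0 ht1
  have hC : |4*(s*(2-s))*(t*(2-t)) - 4*(u n s)*(u n t)| ≤ 64*(n:ℝ)⁻¹ := by
    have hσ0 : 0 ≤ s*(2-s) := by nlinarith
    have hσ1 : s*(2-s) ≤ 1 := by nlinarith [sq_nonneg (1-s)]
    have t1 : |s*(2-s)*((t*(2-t)) - u n t)| ≤ 8*(n:ℝ)⁻¹ := by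
      rw [abs_mul]
      calc (|s*(2-s)|)*(|t*(2-t) - u n t|) ≤ 1*(8*(n:ℝ)⁻¹) := by
            apply mul_le_mul _ _ (abs_nonneg _) zero_le_one
            · rw [abs_of_nonneg hσ0]; exact hσ1
            · rw [abs_sub_comm]; exact hut
        _ = 8*(n:ℝ)⁻¹ := one_mul _
    have t2 : |u n t*((s*(2-s)) - u n s)| ≤ 8*(n:ℝ)⁻¹ := by
      rw [abs_mul]
      calc (|u n t|)*(|s*(2-s) - u n s|) ≤ 1*(8*(n:ℝ)⁻¹) := by
            apply mul_le_mul _ _ (abs_nonneg _) zero_le_one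
            · rw [abs_of_nonneg hut0]; exact hut1
            · rw [abs_sub_comm]; exact hus
        _ = 8*(n:ℝ)⁻¹ := one_mul _
    have hid : 4*(s*(2-s))*(t*(2-t)) - 4*(u n s)*(u n t)
        = 4*(s*(2-s)*((t*(2-t)) - u n t) + u n t*((s*(2-s)) - u n s)) := by ring
    rw [hid, abs_mul, abs_of_nonneg (by norm_num : (0:ℝ) ≤ 4)]
    calc (4:ℝ) * |s*(2-s)*((t*(2-t)) - u n t) + u n t*((s*(2-s)) - u n s)|
        ≤ 4 * (|s*(2-s)*((t*(2-t)) - u n t)| + |u n t*((s*(2-s)) - u n s)|) := by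
          have := abs_add_le (s*(2-s)*((t*(2-t)) - u n t)) (u n t*((s*(2-s)) - u n s))
          linarith
      _ ≤ 4 * (8*(n:ℝ)⁻¹ + 8*(n:ℝ)⁻¹) := by linarith
      _ = 64*(n:ℝ)⁻¹ := by ring
  have hinv : (0:ℝ) < (n:ℝ)⁻¹ := by positivity
  rcases le_or_gt (k + l) n with hcase | hcase
  · -- case k + l ≤ n : compare with γ₁
    have h3T : 3*T = ((k:ℤ)*((k:ℤ)-1)*(2*(k:ℤ)-1) + 3*(k:ℤ)*((l:ℤ)*((l:ℤ)-1)-(k:ℤ)*((k:ℤ)-1))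
          + 6*(k:ℤ)*(l:ℤ)*((n:ℤ)-(l:ℤ)))
        + (3*(l:ℤ)*(k:ℤ)*((k:ℤ)-1) + 6*(k:ℤ)*(l:ℤ)*((n:ℤ)-(k:ℤ)-(l:ℤ))
          + 3*(k:ℤ)*(l:ℤ)*((l:ℤ)-1)) := by
      rw [hTdef, ← hkc, ← hlc, T_red k l n]
      linear_combination A_form k l n hklN hlnN + B1_form k l n hklN hlnN hcase
    have h3TR : 3*((T:ℤ):ℝ) = (((k:ℕ):ℝ)*(((k:ℕ):ℝ)-1)*(2*((k:ℕ):ℝ)-1)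
          + 3*((k:ℕ):ℝ)*(((l:ℕ):ℝ)*(((l:ℕ):ℝ)-1)-((k:ℕ):ℝ)*(((k:ℕ):ℝ)-1))
          + 6*((k:ℕ):ℝ)*((l:ℕ):ℝ)*((n:ℝ)-((l:ℕ):ℝ)))
        + (3*((l:ℕ):ℝ)*((k:ℕ):ℝ)*(((k:ℕ):ℝ)-1)
          + 6*((k:ℕ):ℝ)*((l:ℕ):ℝ)*((n:ℝ)-((k:ℕ):ℝ)-((l:ℕ):ℝ))
          + 3*((k:ℕ):ℝ)*((l:ℕ):ℝ)*(((l:ℕ):ℝ)-1)) := by exact_mod_cast h3T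
    set S1 : ℝ := (((k:ℕ):ℝ)*(((k:ℕ):ℝ)-1)*(2*((k:ℕ):ℝ)-1)
          + 3*((k:ℕ):ℝ)*(((l:ℕ):ℝ)*(((l:ℕ):ℝ)-1)-((k:ℕ):ℝ)*(((k:ℕ):ℝ)-1))
          + 6*((k:ℕ):ℝ)*((l:ℕ):ℝ)*((n:ℝ)-((l:ℕ):ℝ)))
        + (3*((l:ℕ):ℝ)*((k:ℕ):ℝ)*(((k:ℕ):ℝ)-1)
          + 6*((k:ℕ):ℝ)*((l:ℕ):ℝ)*((n:ℝ)-((k:ℕ):ℝ)-((l:ℕ):ℝ))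
          + 3*((k:ℕ):ℝ)*((l:ℕ):ℝ)*(((l:ℕ):ℝ)-1)) with hS1def
    have key1 : |4*(n:ℝ)*S1 - 3*(4*s*(4*t - 2*t^2 - s*t - s^2/3))*((n:ℝ)^2-(n:ℝ))^2|
        ≤ 800*(n:ℝ)^3 := by
      have h := bound1 (n:ℝ) s t ((n:ℝ)*s - ((k:ℕ):ℝ)) ((n:ℝ)*t - ((l:ℕ):ℝ)) hn2 hs0 hs1 ht0 ht1
        (by linarith) (by linarith) (by linarith) (by linarith)
      convert h using 2
      rw [hS1def]; ring
    have hA : |4*(n:ℝ)*((T:ℤ):ℝ)/((n:ℝ)^2-(n:ℝ))^2 - 4*s*(4*t - 2*t^2 - s*t - s^2/3)|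
        ≤ 1100*(n:ℝ)⁻¹ := by
      have hT3' : ((T:ℤ):ℝ) = S1/3 := by linarith [h3TR]
      have hiden : 4*(n:ℝ)*((T:ℤ):ℝ)/((n:ℝ)^2-(n:ℝ))^2 - 4*s*(4*t - 2*t^2 - s*t - s^2/3)
          = (4*(n:ℝ)*S1 - 3*(4*s*(4*t - 2*t^2 - s*t - s^2/3))*((n:ℝ)^2-(n:ℝ))^2)
              /(3*((n:ℝ)^2-(n:ℝ))^2) := by
        rw [hT3']; set D := (n:ℝ)^2-(n:ℝ) with hDdef; field_simp
      have h3Dpos : (0:ℝ) < 3*((n:ℝ)^2-(n:ℝ))^2 := by nlinarith [pow_pos hD 2]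
      rw [hiden, abs_div, abs_of_pos h3Dpos, div_le_iff₀ h3Dpos]
      refine le_trans key1 ?_
      have hexp : 1100*(n:ℝ)⁻¹*(3*((n:ℝ)^2-(n:ℝ))^2) = 3300*(n:ℝ)*((n:ℝ)-1)^2 := by
        field_simp; ring
      rw [hexp]
      nlinarith [mul_nonneg hnR.le (sq_nonneg ((n:ℝ)-2)), sq_nonneg ((n:ℝ)-2)]
    have hB : |4*s*(4*t - 2*t^2 - s*t - s^2/3) - Gam s t| ≤ 3*(n:ℝ)⁻¹ := by
      by_cases h1 : s + t ≤ 1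
      · have hG : Gam s t = 4*s*(4*t - 2*t^2 - s*t - s^2/3) := by
          unfold Gam; rw [if_pos hst, if_pos h1]
        rw [hG, sub_self, abs_zero]; positivity
      · have hG : Gam s t = 4*(s*(1 - s + 2*t - t^2) - (1-t)^3/3) := by
          unfold Gam; rw [if_pos hst, if_neg h1]
        push_neg at h1
        have hklR : ((k:ℕ):ℝ) + ((l:ℕ):ℝ) ≤ (n:ℝ) := by exact_mod_cast hcase
        have h5 : (n:ℝ)*(s+t-1) ≤ 2 := by nlinarith
        have hw2 : s + t - 1 ≤ 2*(n:ℝ)⁻¹ := by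
          rw [show (2:ℝ)*(n:ℝ)⁻¹ = 2/(n:ℝ) from by ring, le_div_iff₀ hnR]
          nlinarith
        have hw0 : 0 ≤ s + t - 1 := by linarith
        have hw1 : s + t - 1 ≤ 1 := by linarith
        have hcube : (s+t-1)^3 ≤ s+t-1 := by
          nlinarith [mul_nonneg (mul_nonneg hw0 (by linarith : (0:ℝ) ≤ 1-(s+t-1)))
            (by linarith : (0:ℝ) ≤ 1+(s+t-1))]
        have hdiff : 4*s*(4*t - 2*t^2 - s*t - s^2/3) - Gam s t = -((4/3)*(s+t-1)^3) := by
          rw [hG]; ring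
        rw [hdiff, abs_neg, abs_of_nonneg (by positivity)]
        linarith
    have decomp : 4*(n:ℝ)*((T:ℤ):ℝ)/((n:ℝ)^2-(n:ℝ))^2 - 4*(u n s)*(u n t)
          - (Gam s t - 4 * (s * (2 - s)) * (t * (2 - t)))
        = (4*(n:ℝ)*((T:ℤ):ℝ)/((n:ℝ)^2-(n:ℝ))^2 - 4*s*(4*t - 2*t^2 - s*t - s^2/3))
          + (4*s*(4*t - 2*t^2 - s*t - s^2/3) - Gam s t)
          + (4*(s*(2-s))*(t*(2-t)) - 4*(u n s)*(u n t)) := by ring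
    rw [decomp]
    have e1 := abs_add_le (4*(n:ℝ)*((T:ℤ):ℝ)/((n:ℝ)^2-(n:ℝ))^2 - 4*s*(4*t - 2*t^2 - s*t - s^2/3))
      (4*s*(4*t - 2*t^2 - s*t - s^2/3) - Gam s t)
    have e2 := abs_add_le ((4*(n:ℝ)*((T:ℤ):ℝ)/((n:ℝ)^2-(n:ℝ))^2 - 4*s*(4*t - 2*t^2 - s*t - s^2/3))
        + (4*s*(4*t - 2*t^2 - s*t - s^2/3) - Gam s t))
      (4*(s*(2-s))*(t*(2-t)) - 4*(u n s)*(u n t))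
    linarith
  · -- case n < k + l : compare with γ₂
    have hcase' : n ≤ k + l := hcase.le
    have h3T : 3*T = ((k:ℤ)*((k:ℤ)-1)*(2*(k:ℤ)-1) + 3*(k:ℤ)*((l:ℤ)*((l:ℤ)-1)-(k:ℤ)*((k:ℤ)-1))
          + 6*(k:ℤ)*(l:ℤ)*((n:ℤ)-(l:ℤ)))
        + (3*(l:ℤ)*((n:ℤ)-(l:ℤ))*((n:ℤ)-(l:ℤ)-1)
          + (3*((n:ℤ)-1)*((k:ℤ)*((k:ℤ)-1)-((n:ℤ)-(l:ℤ))*((n:ℤ)-(l:ℤ)-1))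
              - ((k:ℤ)*((k:ℤ)-1)*(2*(k:ℤ)-1)
                - ((n:ℤ)-(l:ℤ))*((n:ℤ)-(l:ℤ)-1)*(2*((n:ℤ)-(l:ℤ))-1)))
          + 3*(k:ℤ)*((n:ℤ)-(k:ℤ))*((n:ℤ)-(k:ℤ)-1)) := by
      rw [hTdef, ← hkc, ← hlc, T_red k l n]
      linear_combination A_form k l n hklN hlnN + B2_form k l n hklN hlnN hcase'
    have h3TR : 3*((T:ℤ):ℝ) = (((k:ℕ):ℝ)*(((k:ℕ):ℝ)-1)*(2*((k:ℕ):ℝ)-1)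
          + 3*((k:ℕ):ℝ)*(((l:ℕ):ℝ)*(((l:ℕ):ℝ)-1)-((k:ℕ):ℝ)*(((k:ℕ):ℝ)-1))
          + 6*((k:ℕ):ℝ)*((l:ℕ):ℝ)*((n:ℝ)-((l:ℕ):ℝ)))
        + (3*((l:ℕ):ℝ)*((n:ℝ)-((l:ℕ):ℝ))*((n:ℝ)-((l:ℕ):ℝ)-1)
          + (3*((n:ℝ)-1)*(((k:ℕ):ℝ)*(((k:ℕ):ℝ)-1)-((n:ℝ)-((l:ℕ):ℝ))*((n:ℝ)-((l:ℕ):ℝ)-1))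
              - (((k:ℕ):ℝ)*(((k:ℕ):ℝ)-1)*(2*((k:ℕ):ℝ)-1)
                - ((n:ℝ)-((l:ℕ):ℝ))*((n:ℝ)-((l:ℕ):ℝ)-1)*(2*((n:ℝ)-((l:ℕ):ℝ))-1)))
          + 3*((k:ℕ):ℝ)*((n:ℝ)-((k:ℕ):ℝ))*((n:ℝ)-((k:ℕ):ℝ)-1)) := by exact_mod_cast h3T
    set S2 : ℝ := (((k:ℕ):ℝ)*(((k:ℕ):ℝ)-1)*(2*((k:ℕ):ℝ)-1)
          + 3*((k:ℕ):ℝ)*(((l:ℕ):ℝ)*(((l:ℕ):ℝ)-1)-((k:ℕ):ℝ)*(((k:ℕ):ℝ)-1))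
          + 6*((k:ℕ):ℝ)*((l:ℕ):ℝ)*((n:ℝ)-((l:ℕ):ℝ)))
        + (3*((l:ℕ):ℝ)*((n:ℝ)-((l:ℕ):ℝ))*((n:ℝ)-((l:ℕ):ℝ)-1)
          + (3*((n:ℝ)-1)*(((k:ℕ):ℝ)*(((k:ℕ):ℝ)-1)-((n:ℝ)-((l:ℕ):ℝ))*((n:ℝ)-((l:ℕ):ℝ)-1))
              - (((k:ℕ):ℝ)*(((k:ℕ):ℝ)-1)*(2*((k:ℕ):ℝ)-1)
                - ((n:ℝ)-((l:ℕ):ℝ))*((n:ℝ)-((l:ℕ):ℝ)-1)*(2*((n:ℝ)-((l:ℕ):ℝ))-1)))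
          + 3*((k:ℕ):ℝ)*((n:ℝ)-((k:ℕ):ℝ))*((n:ℝ)-((k:ℕ):ℝ)-1)) with hS2def
    have key2 : |4*(n:ℝ)*S2 - 3*(4*(s*(1 - s + 2*t - t^2) - (1-t)^3/3))*((n:ℝ)^2-(n:ℝ))^2|
        ≤ 800*(n:ℝ)^3 := by
      have h := bound2 (n:ℝ) s t ((n:ℝ)*s - ((k:ℕ):ℝ)) ((n:ℝ)*t - ((l:ℕ):ℝ)) hn2 hs0 hs1 ht0 ht1
        (by linarith) (by linarith) (by linarith) (by linarith)
      convert h using 2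
      rw [hS2def]; ring
    have hA : |4*(n:ℝ)*((T:ℤ):ℝ)/((n:ℝ)^2-(n:ℝ))^2 - 4*(s*(1 - s + 2*t - t^2) - (1-t)^3/3)|
        ≤ 1100*(n:ℝ)⁻¹ := by
      have hT3' : ((T:ℤ):ℝ) = S2/3 := by linarith [h3TR]
      have hiden : 4*(n:ℝ)*((T:ℤ):ℝ)/((n:ℝ)^2-(n:ℝ))^2 - 4*(s*(1 - s + 2*t - t^2) - (1-t)^3/3)
          = (4*(n:ℝ)*S2 - 3*(4*(s*(1 - s + 2*t - t^2) - (1-t)^3/3))*((n:ℝ)^2-(n:ℝ))^2)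
              /(3*((n:ℝ)^2-(n:ℝ))^2) := by
        rw [hT3']; set D := (n:ℝ)^2-(n:ℝ) with hDdef; field_simp
      have h3Dpos : (0:ℝ) < 3*((n:ℝ)^2-(n:ℝ))^2 := by nlinarith [pow_pos hD 2]
      rw [hiden, abs_div, abs_of_pos h3Dpos, div_le_iff₀ h3Dpos]
      refine le_trans key2 ?_
      have hexp : 1100*(n:ℝ)⁻¹*(3*((n:ℝ)^2-(n:ℝ))^2) = 3300*(n:ℝ)*((n:ℝ)-1)^2 := by
        field_simp; ring
      rw [hexp]
      nlinarith [mul_nonneg hnR.le (sq_nonneg ((n:ℝ)-2)), sq_nonneg ((n:ℝ)-2)]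
    have hklR : (n:ℝ) + 1 ≤ ((k:ℕ):ℝ) + ((l:ℕ):ℝ) := by exact_mod_cast hcase
    have hgt : ¬ (s + t ≤ 1) := by
      push_neg
      nlinarith
    have hG : Gam s t = 4*(s*(1 - s + 2*t - t^2) - (1-t)^3/3) := by
      unfold Gam; rw [if_pos hst, if_neg hgt]
    have decomp : 4*(n:ℝ)*((T:ℤ):ℝ)/((n:ℝ)^2-(n:ℝ))^2 - 4*(u n s)*(u n t)
          - (Gam s t - 4 * (s * (2 - s)) * (t * (2 - t)))
        = (4*(n:ℝ)*((T:ℤ):ℝ)/((n:ℝ)^2-(n:ℝ))^2 - 4*(s*(1 - s + 2*t - t^2) - (1-t)^3/3))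
          + (4*(s*(1 - s + 2*t - t^2) - (1-t)^3/3) - Gam s t)
          + (4*(s*(2-s))*(t*(2-t)) - 4*(u n s)*(u n t)) := by ring
    rw [decomp]
    have hB : |4*(s*(1 - s + 2*t - t^2) - (1-t)^3/3) - Gam s t| = 0 := by
      rw [hG, sub_self, abs_zero]
    have e1 := abs_add_le (4*(n:ℝ)*((T:ℤ):ℝ)/((n:ℝ)^2-(n:ℝ))^2 - 4*(s*(1 - s + 2*t - t^2) - (1-t)^3/3))
      (4*(s*(1 - s + 2*t - t^2) - (1-t)^3/3) - Gam s t)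
    have e2 := abs_add_le ((4*(n:ℝ)*((T:ℤ):ℝ)/((n:ℝ)^2-(n:ℝ))^2 - 4*(s*(1 - s + 2*t - t^2) - (1-t)^3/3))
        + (4*(s*(1 - s + 2*t - t^2) - (1-t)^3/3) - Gam s t))
      (4*(s*(2-s))*(t*(2-t)) - 4*(u n s)*(u n t))
    linarith

theorem centered_covariance_approximation :
    ∃ C : ℝ, 0 < C ∧ ∀ n : ℕ, 2 ≤ n → ∀ s ∈ Set.Icc (0:ℝ) 1, ∀ t ∈ Set.Icc (0:ℝ) 1,
      |(n : ℝ) * (∑ i ∈ Finset.Icc 1 n,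
            (nu n i s - 2 * (n : ℝ)⁻¹ * u n s) * (nu n i t - 2 * (n : ℝ)⁻¹ * u n t)) -
          (Gam s t - 4 * (s * (2 - s)) * (t * (2 - t)))| ≤ C * (n : ℝ)⁻¹ := by
  refine ⟨2000, by norm_num, fun n hn s hs t ht => ?_⟩
  obtain ⟨hs0, hs1⟩ := hs
  obtain ⟨ht0, ht1⟩ := ht
  rcases le_total s t with hst | hst
  · exact main_est n hn s t hs0 hs1 ht0 ht1 hst
  · have hswap : (∑ i ∈ Finset.Icc 1 n,
        (nu n i s - 2 * (n:ℝ)⁻¹ * u n s) * (nu n i t - 2 * (n:ℝ)⁻¹ * u n t))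
        = (∑ i ∈ Finset.Icc 1 n,
        (nu n i t - 2 * (n:ℝ)⁻¹ * u n t) * (nu n i s - 2 * (n:ℝ)⁻¹ * u n s)) :=
      Finset.sum_congr rfl fun i _ => mul_comm _ _
    rw [hswap, Gam_comm s t,
      show (4:ℝ) * (s * (2 - s)) * (t * (2 - t)) = 4 * (t * (2 - t)) * (s * (2 - s)) from by ring]
    exact main_est n hn t s ht0 ht1 hs0 hs1 hst
end
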